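/- arXiv:1610.08160 — 3 statements merged into one kernel-verified Lean document; each statement's English description precedes it below -/
import Mathlib

section
/- Let f ∈ F_θ(Σ_A⁺) be real-valued and let λ = λ_f, ν = ν_f, h = h_f be as in the Ruelle–Perron–Frobenius theorem (L_f h = λ h, L_f* ν = λ ν, ∫ h dν = 1, h > 0). Then ‖h‖_θ ≤ (6 s₀^M b_f / (θ² (1−θ))) · e^{4 b_f/(1−θ)} · e^{2M |f|_∞}, where b_f = max{1, |f|_θ}. -/
open MeasureTheory Real ENNReal

namespace SFT

/-- The one-sided subshift of finite type determined by the 0-1 matrix `A`. -/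
def Space {s₀ : ℕ} (A : Matrix (Fin s₀) (Fin s₀) ℕ) : Type :=
  {ξ : ℕ → Fin s₀ // ∀ i, A (ξ i) (ξ (i + 1)) = 1}

variable {s₀ : ℕ} {A : Matrix (Fin s₀) (Fin s₀) ℕ}

instance : TopologicalSpace (Space A) :=
  inferInstanceAs (TopologicalSpace {ξ : ℕ → Fin s₀ // ∀ i, A (ξ i) (ξ (i + 1)) = 1})

noncomputable instance : MeasurableSpace (Space A) := borel _
instance : BorelSpace (Space A) := ⟨rfl⟩

/-- The shift map σ. -/
def shift (x : Space A) : Space A := ⟨fun i => x.1 (i + 1), fun i => x.2 (i + 1)⟩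

/-- `var_k g` as an extended real. -/
noncomputable def evar (g : Space A → ℝ) (k : ℕ) : ℝ≥0∞ :=
  ⨆ (ξ : Space A) (η : Space A) (_ : ∀ i ≤ k, ξ.1 i = η.1 i), ENNReal.ofReal |g ξ - g η|

/-- `|g|_θ` as an extended real. -/
noncomputable def eHolder (θ : ℝ) (g : Space A → ℝ) : ℝ≥0∞ :=
  ⨆ k : ℕ, evar g k / ENNReal.ofReal (θ ^ k)

/-- `|g|_∞` as an extended real. -/
noncomputable def eSup (g : Space A → ℝ) : ℝ≥0∞ :=
  ⨆ ξ : Space A, ENNReal.ofReal |g ξ|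

/-- `|g|_θ`. -/
noncomputable def holderNorm (θ : ℝ) (g : Space A → ℝ) : ℝ := (eHolder θ g).toReal

/-- `|g|_∞`. -/
noncomputable def supNorm (g : Space A → ℝ) : ℝ := (eSup g).toReal

/-- `‖g‖_θ = |g|_θ + |g|_∞`. -/
noncomputable def fNorm (θ : ℝ) (g : Space A → ℝ) : ℝ := holderNorm θ g + supNorm g

/-- Membership in `F_θ(Σ_A⁺)`: finiteness of `‖g‖_θ`. -/
def MemF (θ : ℝ) (g : Space A → ℝ) : Prop := eHolder θ g + eSup g < ⊤


instance shiftFiberFinite (x : Space A) : Finite {y : Space A // shift y = x} := by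
  apply Finite.of_injective (fun y : {y : Space A // shift y = x} => y.1.1 0)
  rintro ⟨y, hy⟩ ⟨z, hz⟩ h
  apply Subtype.ext
  apply Subtype.ext
  funext n
  cases n with
  | zero => exact h
  | succ i =>
    have h1 : y.1 (i + 1) = x.1 i := congrFun (congrArg Subtype.val hy) i
    have h2 : z.1 (i + 1) = x.1 i := congrFun (congrArg Subtype.val hz) i
    rw [h1, h2]

/-- The Ruelle transfer operator `(L_f g)(x) = Σ_{σ y = x} e^{f(y)} g(y)`. -/
noncomputable def transfer (f g : Space A → ℝ) (x : Space A) : ℝ :=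
  ∑' y : {y : Space A // shift y = x}, Real.exp (f y.1) * g y.1

/-- Two functions are cohomologous if they differ by a continuous coboundary. -/
def Cohomologous (u v : Space A → ℝ) : Prop :=
  ∃ w : Space A → ℝ, Continuous w ∧ ∀ x, u x = v x + w (shift x) - w x

/-- ψ is cohomologous to a constant. -/
def CohomToConst (ψ : Space A → ℝ) : Prop := ∃ c : ℝ, Cohomologous ψ fun _ => c

/-- A finite measurable partition of the space. -/
def IsPartition {k : ℕ} (P : Fin k → Set (Space A)) : Prop :=
  (∀ i, MeasurableSet (P i)) ∧ (Pairwise fun i j => Disjoint (P i) (P j)) ∧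
    (⋃ i, P i) = Set.univ

/-- Entropy of the n-th join `⋁_{j<n} σ^{-j} P` of a partition. -/
noncomputable def joinEntropy (m : Measure (Space A)) {k : ℕ} (P : Fin k → Set (Space A))
    (n : ℕ) : ℝ :=
  ∑ a : Fin n → Fin k,
    Real.negMulLog (m (⋂ j : Fin n, shift^[(j : ℕ)] ⁻¹' P (a j))).toReal

/-- Measure-theoretic (Kolmogorov–Sinai) entropy of `m` with respect to the shift. -/
noncomputable def entropy (m : Measure (Space A)) : ℝ :=
  sSup {h | ∃ k : ℕ, ∃ P : Fin k → Set (Space A), IsPartition P ∧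
    h = ⨅ n : ℕ, joinEntropy m P (n + 1) / (n + 1)}

/-- σ-invariance of a measure. -/
def IsInvariant (m : Measure (Space A)) : Prop := m.map shift = m

/-- Topological pressure via the variational principle. -/
noncomputable def pressure (g : Space A → ℝ) : ℝ :=
  sSup {r | ∃ m : Measure (Space A), IsProbabilityMeasure m ∧ IsInvariant m ∧
    r = entropy m + ∫ x, g x ∂m}

/-- `m` is an equilibrium state of `g`. -/
def IsEqm (g : Space A → ℝ) (m : Measure (Space A)) : Prop :=
  IsProbabilityMeasure m ∧ IsInvariant m ∧ entropy m + ∫ x, g x ∂m = pressure g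

/-- The Ruelle–Perron–Frobenius data of `f`: an eigenvalue `lam > 0`, a probability
eigenmeasure `ν` of the dual operator, and a positive normalised eigenfunction `h ∈ F_θ`. -/
def IsRPF (θ : ℝ) (f : Space A → ℝ) (lam : ℝ) (ν : Measure (Space A))
    (h : Space A → ℝ) : Prop :=
  0 < lam ∧ IsProbabilityMeasure ν ∧
    (∀ g : Space A → ℝ, Continuous g → ∫ x, transfer f g x ∂ν = lam * ∫ x, g x ∂ν) ∧
    MemF θ h ∧ (∀ x, 0 < h x) ∧ (∀ x, transfer f h x = lam * h x) ∧ (∫ x, h x ∂ν) = 1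



/-! ### Auxiliary development -/

section Aux

lemma shift_iter_apply (n : ℕ) (y : Space A) (i : ℕ) :
    (shift^[n] y).1 i = y.1 (i + n) := by
  induction n generalizing y i with
  | zero => rfl
  | succ n ih =>
    rw [Function.iterate_succ_apply, ih]
    rfl

instance shiftIterFiberFinite (n : ℕ) (x : Space A) :
    Finite {y : Space A // shift^[n] y = x} := by
  apply Finite.of_injective
    (fun y : {y : Space A // shift^[n] y = x} => (fun i : Fin n => y.1.1 i))
  rintro ⟨y, hy⟩ ⟨z, hz⟩ hh
  apply Subtype.ext; apply Subtype.ext; funext i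
  rcases lt_or_ge i n with hi | hi
  · exact congrFun hh ⟨i, hi⟩
  · have h1 : y.1 i = x.1 (i - n) := by
      have := congrArg (fun w : Space A => w.1 (i - n)) hy
      beta_reduce at this
      rw [shift_iter_apply] at this
      rwa [Nat.sub_add_cancel hi] at this
    have h2 : z.1 i = x.1 (i - n) := by
      have := congrArg (fun w : Space A => w.1 (i - n)) hz
      beta_reduce at this
      rw [shift_iter_apply] at this
      rwa [Nat.sub_add_cancel hi] at this
    rw [h1, h2]

/-- Pointwise bound by the sup norm. -/
lemma abs_le_supNorm {θ : ℝ} {g : Space A → ℝ} (hg : MemF θ g) (ξ : Space A) :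
    |g ξ| ≤ supNorm g := by
  have hfin : eSup g ≠ ⊤ := by
    intro hc
    rw [MemF, hc, add_top] at hg
    exact (lt_irrefl _ hg)
  have h1 : ENNReal.ofReal |g ξ| ≤ eSup g := le_iSup (fun ξ => ENNReal.ofReal |g ξ|) ξ
  calc |g ξ| = (ENNReal.ofReal |g ξ|).toReal := (ENNReal.toReal_ofReal (abs_nonneg _)).symm
  _ ≤ (eSup g).toReal := ENNReal.toReal_mono hfin h1

/-- Pointwise Hölder bound. -/
lemma dist_le_holder {θ : ℝ} (hθ0 : 0 < θ) {g : Space A → ℝ} (hg : MemF θ g) (k : ℕ)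
    (ξ η : Space A) (hag : ∀ i ≤ k, ξ.1 i = η.1 i) :
    |g ξ - g η| ≤ holderNorm θ g * θ ^ k := by
  have hfin : eHolder θ g ≠ ⊤ := by
    intro hc
    rw [MemF, hc, top_add] at hg
    exact (lt_irrefl _ hg)
  have hθk : (0:ℝ) < θ ^ k := pow_pos hθ0 k
  have h1 : ENNReal.ofReal |g ξ - g η| ≤ evar g k := by
    apply le_iSup_of_le ξ; apply le_iSup_of_le η; exact le_iSup_of_le hag le_rfl
  have h2 : evar g k / ENNReal.ofReal (θ ^ k) ≤ eHolder θ g :=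
    le_iSup (fun k => evar g k / ENNReal.ofReal (θ ^ k)) k
  have h3 : evar g k ≤ eHolder θ g * ENNReal.ofReal (θ ^ k) := by
    rw [← ENNReal.div_le_iff (by simp [hθk]) (by simp)]
    exact h2
  have h4 : ENNReal.ofReal |g ξ - g η| ≤ eHolder θ g * ENNReal.ofReal (θ ^ k) :=
    le_trans h1 h3
  have h5 : (eHolder θ g * ENNReal.ofReal (θ ^ k)) ≠ ⊤ :=
    ENNReal.mul_ne_top hfin (by simp)
  calc |g ξ - g η| = (ENNReal.ofReal |g ξ - g η|).toReal :=
        (ENNReal.toReal_ofReal (abs_nonneg _)).symm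
  _ ≤ (eHolder θ g * ENNReal.ofReal (θ ^ k)).toReal := ENNReal.toReal_mono h5 h4
  _ = holderNorm θ g * θ ^ k := by
      rw [ENNReal.toReal_mul, ENNReal.toReal_ofReal hθk.le]; rfl

lemma supNorm_le {g : Space A → ℝ} {C : ℝ} (hC : 0 ≤ C) (hb : ∀ ξ, |g ξ| ≤ C) :
    supNorm g ≤ C := by
  have h1 : eSup g ≤ ENNReal.ofReal C := iSup_le fun ξ => ENNReal.ofReal_le_ofReal (hb ξ)
  calc (eSup g).toReal ≤ (ENNReal.ofReal C).toReal := ENNReal.toReal_mono (by simp) h1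
  _ = C := ENNReal.toReal_ofReal hC

lemma holderNorm_le {θ : ℝ} (hθ0 : 0 < θ) {g : Space A → ℝ} {C : ℝ} (hC : 0 ≤ C)
    (hb : ∀ k (ξ η : Space A), (∀ i ≤ k, ξ.1 i = η.1 i) → |g ξ - g η| ≤ C * θ ^ k) :
    holderNorm θ g ≤ C := by
  have h1 : eHolder θ g ≤ ENNReal.ofReal C := by
    apply iSup_le; intro k
    have hθk : (0:ℝ) < θ ^ k := pow_pos hθ0 k
    rw [ENNReal.div_le_iff (by simp [hθk]) (by simp)]
    apply iSup_le; intro ξ; apply iSup_le; intro η; apply iSup_le; intro hag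
    calc ENNReal.ofReal |g ξ - g η| ≤ ENNReal.ofReal (C * θ ^ k) :=
          ENNReal.ofReal_le_ofReal (hb k ξ η hag)
    _ = ENNReal.ofReal C * ENNReal.ofReal (θ ^ k) := ENNReal.ofReal_mul hC
  calc (eHolder θ g).toReal ≤ (ENNReal.ofReal C).toReal := ENNReal.toReal_mono (by simp) h1
  _ = C := ENNReal.toReal_ofReal hC

/-- Birkhoff sums. -/
noncomputable def birk (f : Space A → ℝ) (n : ℕ) (y : Space A) : ℝ :=
  ∑ j ∈ Finset.range n, f (shift^[j] y)

/-- Decomposition of an `(n+1)`-fiber. -/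
def iterFiberEquiv (n : ℕ) (x : Space A) :
    {y : Space A // shift^[n+1] y = x} ≃
      Σ z : {z : Space A // shift z = x}, {y : Space A // shift^[n] y = z.1} where
  toFun y := ⟨⟨shift^[n] y.1, by
      rw [← Function.iterate_succ_apply' shift n y.1]; exact y.2⟩, ⟨y.1, rfl⟩⟩
  invFun p := ⟨p.2.1, by
      rw [Function.iterate_succ_apply' shift n p.2.1, p.2.2]; exact p.1.2⟩
  left_inv y := Subtype.ext rfl
  right_inv p := by
    rcases p with ⟨⟨z, hz⟩, ⟨y, hy⟩⟩
    simp only at hy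
    subst hy
    rfl

/-- Iterated eigen-equation. -/
lemma iter_eigen {f h : Space A → ℝ} {lam : ℝ}
    (heig : ∀ x, transfer f h x = lam * h x) (n : ℕ) (x : Space A) :
    lam ^ n * h x = ∑' y : {y : Space A // shift^[n] y = x},
      Real.exp (birk f n y.1) * h y.1 := by
  induction n generalizing x with
  | zero =>
    have hu : ∀ a : {y : Space A // shift^[0] y = x}, a = ⟨x, rfl⟩ := by
      rintro ⟨y, hy⟩
      exact Subtype.ext hy
    rw [tsum_eq_single (⟨x, rfl⟩ : {y : Space A // shift^[0] y = x})
      (fun b hb => absurd (hu b) hb)]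
    simp [birk]
  | succ n ih =>
    calc lam ^ (n+1) * h x = lam ^ n * (lam * h x) := by ring
    _ = lam ^ n * transfer f h x := by rw [heig]
    _ = ∑' z : {z : Space A // shift z = x}, lam ^ n * (Real.exp (f z.1) * h z.1) := by
        rw [transfer, tsum_mul_left]
    _ = ∑' z : {z : Space A // shift z = x},
          ∑' y : {y : Space A // shift^[n] y = z.1},
            Real.exp (f z.1) * (Real.exp (birk f n y.1) * h y.1) := by
        refine tsum_congr fun z => ?_
        rw [tsum_mul_left, ← ih z.1]
        ring
    _ = ∑' p : (Σ z : {z : Space A // shift z = x}, {y : Space A // shift^[n] y = z.1}),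
          Real.exp (f p.1.1) * (Real.exp (birk f n p.2.1) * h p.2.1) := by
        exact (Summable.tsum_sigma (f := fun p :
          (Σ z : {z : Space A // shift z = x}, {y : Space A // shift^[n] y = z.1}) =>
          Real.exp (f p.1.1) * (Real.exp (birk f n p.2.1) * h p.2.1))
          Summable.of_finite).symm
    _ = ∑' y : {y : Space A // shift^[n+1] y = x},
          Real.exp (birk f (n+1) y.1) * h y.1 := by
        rw [← (iterFiberEquiv n x).tsum_eq]
        refine tsum_congr fun y => ?_
        show Real.exp (f (shift^[n] y.1)) * (Real.exp (birk f n y.1) * h y.1) = _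
        simp only [birk, Finset.sum_range_succ, Real.exp_add]
        ring

/-- Gluing of sequences. -/
def glue (n : ℕ) (y x' : ℕ → Fin s₀) : ℕ → Fin s₀ := fun i => if i < n then y i else x' (i - n)

lemma glue_adm {n : ℕ} {y x' : ℕ → Fin s₀}
    (hy : ∀ i, i + 1 ≤ n → A (y i) (y (i+1)) = 1) (hx' : ∀ i, A (x' i) (x' (i+1)) = 1)
    (hlink : y n = x' 0) (i : ℕ) : A (glue n y x' i) (glue n y x' (i+1)) = 1 := by
  unfold glue
  rcases lt_trichotomy (i+1) n with h1 | h1 | h1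
  · rw [if_pos (by omega), if_pos h1]; exact hy i (by omega)
  · rw [if_pos (by omega), if_neg (by omega)]
    have h2 : i + 1 - n = 0 := by omega
    rw [h2, ← hlink, ← h1]
    exact hy i (by omega)
  · rw [if_neg (by omega), if_neg (by omega)]
    have h2 : i + 1 - n = (i - n) + 1 := by omega
    rw [h2]; exact hx' _

lemma glue_shift {n : ℕ} (y x' : ℕ → Fin s₀) (i : ℕ) : glue n y x' (i + n) = x' i := by
  unfold glue
  rw [if_neg (by omega)]
  congr 1
  omega

/-- The pairing map between `n`-fibers over points agreeing at coordinate 0. -/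
def pairMap (n : ℕ) (x x' : Space A) (h0 : x.1 0 = x'.1 0)
    (y : {y : Space A // shift^[n] y = x}) : {y : Space A // shift^[n] y = x'} :=
  ⟨⟨glue n y.1.1 x'.1, glue_adm (fun i _ => y.1.2 i) x'.2 (by
      have hh := congrArg (fun w : Space A => w.1 0) y.2
      beta_reduce at hh
      rw [shift_iter_apply, Nat.zero_add] at hh
      rw [hh, h0])⟩, by
    apply Subtype.ext; funext i
    refine (shift_iter_apply n _ i).trans ?_
    exact glue_shift _ _ i⟩

lemma pairMap_inv (n : ℕ) (x x' : Space A) (h0 : x.1 0 = x'.1 0)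
    (y : {y : Space A // shift^[n] y = x}) :
    pairMap n x' x h0.symm (pairMap n x x' h0 y) = y := by
  apply Subtype.ext; apply Subtype.ext; funext i
  show glue n (glue n y.1.1 x'.1) x.1 i = y.1.1 i
  unfold glue
  split_ifs with hi
  · rfl
  · push_neg at hi
    have hh := congrArg (fun w : Space A => w.1 (i - n)) y.2
    beta_reduce at hh
    rw [shift_iter_apply, Nat.sub_add_cancel hi] at hh
    exact hh.symm

/-- The pairing bijection between `n`-fibers over points agreeing at coordinate 0. -/
def pairEquiv (n : ℕ) (x x' : Space A) (h0 : x.1 0 = x'.1 0) :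
    {y : Space A // shift^[n] y = x} ≃ {y : Space A // shift^[n] y = x'} where
  toFun := pairMap n x x' h0
  invFun := pairMap n x' x h0.symm
  left_inv := pairMap_inv n x x' h0
  right_inv := pairMap_inv n x' x h0.symm

lemma pairEquiv_agree (n : ℕ) (x x' : Space A) (k : ℕ) (hag : ∀ i ≤ k, x.1 i = x'.1 i)
    (y : {y : Space A // shift^[n] y = x}) :
    ∀ i ≤ n + k, y.1.1 i = ((pairEquiv n x x' (hag 0 (Nat.zero_le k))) y).1.1 i := by
  intro i hi
  show y.1.1 i = glue n y.1.1 x'.1 i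
  unfold glue
  rcases lt_or_ge i n with h | h
  · rw [if_pos h]
  · rw [if_neg (by omega)]
    have h1 : y.1.1 i = x.1 (i - n) := by
      have hh := congrArg (fun w : Space A => w.1 (i - n)) y.2
      beta_reduce at hh
      rw [shift_iter_apply, Nat.sub_add_cancel h] at hh
      exact hh
    rw [h1]
    exact hag (i - n) (by omega)

lemma geom_tail_le {θ : ℝ} (hθ0 : 0 < θ) (hθ1 : θ < 1) (n : ℕ) :
    ∑ j ∈ Finset.range n, θ ^ (n - j) ≤ θ / (1 - θ) := by
  have h1 : ∑ j ∈ Finset.range n, θ ^ (n - j) = ∑ t ∈ Finset.range n, θ ^ (t + 1) := by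
    rw [← Finset.sum_range_reflect]
    apply Finset.sum_congr rfl
    intro j hj
    rw [Finset.mem_range] at hj
    congr 1
    omega
  rw [h1]
  have h2 : ∑ t ∈ Finset.range n, θ ^ (t + 1) = θ * ∑ t ∈ Finset.range n, θ ^ t := by
    rw [Finset.mul_sum]
    apply Finset.sum_congr rfl
    intro t _
    rw [pow_succ]
    ring
  rw [h2]
  have h3 : ∑ t ∈ Finset.range n, θ ^ t ≤ 1 / (1 - θ) := by
    rw [geom_sum_eq (by linarith : θ ≠ 1)]
    have hden : θ - 1 ≠ 0 := by linarith
    have h4 : (θ ^ n - 1)/(θ - 1) = (1 - θ ^ n)/(1 - θ) := by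
      rw [div_eq_div_iff hden (by linarith : (1:ℝ) - θ ≠ 0)]
      ring
    rw [h4, div_le_div_iff₀ (by linarith) (by linarith)]
    have hp : (0:ℝ) ≤ θ ^ n := (pow_pos hθ0 n).le
    nlinarith
  calc θ * ∑ t ∈ Finset.range n, θ ^ t ≤ θ * (1 / (1 - θ)) := by
        apply mul_le_mul_of_nonneg_left h3 hθ0.le
  _ = θ / (1 - θ) := by ring

lemma birk_pair {θ b : ℝ} (hθ0 : 0 < θ) (hθ1 : θ < 1) {f : Space A → ℝ} (hb : 0 ≤ b)
    (hf : ∀ k (ξ η : Space A), (∀ i ≤ k, ξ.1 i = η.1 i) → |f ξ - f η| ≤ b * θ ^ k)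
    (n k : ℕ) (x x' : Space A) (hag : ∀ i ≤ k, x.1 i = x'.1 i)
    (y : {y : Space A // shift^[n] y = x}) :
    |birk f n y.1 - birk f n ((pairEquiv n x x' (hag 0 (Nat.zero_le k))) y).1|
      ≤ b * (θ / (1 - θ)) * θ ^ k := by
  set ψy := (pairEquiv n x x' (hag 0 (Nat.zero_le k))) y with hψ
  have key : ∀ j < n, |f (shift^[j] y.1) - f (shift^[j] ψy.1)| ≤ b * θ ^ (k + (n - j)) := by
    intro j hj
    apply hf
    intro i hi
    rw [shift_iter_apply, shift_iter_apply]
    exact pairEquiv_agree n x x' k hag y (i + j) (by omega)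
  calc |birk f n y.1 - birk f n ψy.1|
      = |∑ j ∈ Finset.range n, (f (shift^[j] y.1) - f (shift^[j] ψy.1))| := by
        rw [birk, birk, Finset.sum_sub_distrib]
  _ ≤ ∑ j ∈ Finset.range n, |f (shift^[j] y.1) - f (shift^[j] ψy.1)| :=
        Finset.abs_sum_le_sum_abs _ _
  _ ≤ ∑ j ∈ Finset.range n, b * θ ^ (k + (n - j)) := by
        apply Finset.sum_le_sum
        intro j hj
        exact key j (Finset.mem_range.mp hj)
  _ = b * θ ^ k * ∑ j ∈ Finset.range n, θ ^ (n - j) := by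
        rw [Finset.mul_sum]
        apply Finset.sum_congr rfl
        intro j _
        rw [pow_add]
        ring
  _ ≤ b * θ ^ k * (θ / (1 - θ)) := by
        apply mul_le_mul_of_nonneg_left (geom_tail_le hθ0 hθ1 n)
        positivity
  _ = b * (θ / (1 - θ)) * θ ^ k := by ring


/-- The fundamental ratio estimate for the eigenfunction. -/
lemma core_ratio {θ b lam : ℝ} {f h : Space A → ℝ} (hθ0 : 0 < θ) (hθ1 : θ < 1)
    (hlam : 0 < lam) (heig : ∀ x, transfer f h x = lam * h x)
    (hb : 0 ≤ b)
    (hf : ∀ k (ξ η : Space A), (∀ i ≤ k, ξ.1 i = η.1 i) → |f ξ - f η| ≤ b * θ ^ k)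
    {H m : ℝ} (hH : 0 ≤ H)
    (hvar : ∀ k (ξ η : Space A), (∀ i ≤ k, ξ.1 i = η.1 i) → |h ξ - h η| ≤ H * θ ^ k)
    (hpos : ∀ ξ, 0 < h ξ)
    (hm : 0 < m) (hmin : ∀ ξ, m ≤ h ξ)
    (k : ℕ) (x x' : Space A) (hag : ∀ i ≤ k, x.1 i = x'.1 i) :
    h x ≤ Real.exp (b * (θ / (1 - θ)) * θ ^ k) * h x' := by
  set δ := b * (θ / (1 - θ)) * θ ^ k with hδ
  have hstep : ∀ n : ℕ, h x ≤ Real.exp δ * (1 + H * θ ^ (n + k) / m) * h x' := by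
    intro n
    set Ψ := pairEquiv n x x' (hag 0 (Nat.zero_le k)) with hΨ
    set c : ℝ := H * θ ^ (n + k) / m with hc
    have hc0 : 0 ≤ c := by
      apply div_nonneg _ hm.le
      exact mul_nonneg hH (pow_pos hθ0 _).le
    have hterm : ∀ y : {y : Space A // shift^[n] y = x},
        Real.exp (birk f n y.1) * h y.1 ≤
          Real.exp δ * (1 + c) * (Real.exp (birk f n (Ψ y).1) * h (Ψ y).1) := by
      intro y
      have h1 : Real.exp (birk f n y.1) ≤ Real.exp δ * Real.exp (birk f n (Ψ y).1) := by
        rw [← Real.exp_add]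
        apply Real.exp_le_exp.mpr
        have habs := abs_le.mp (birk_pair hθ0 hθ1 hb hf n k x x' hag y)
        linarith [habs.2]
      have h2 : h y.1 ≤ (1 + c) * h (Ψ y).1 := by
        have hvv := (abs_le.mp (hvar (n + k) y.1 (Ψ y).1
          (pairEquiv_agree n x x' k hag y))).2
        have hmy : m ≤ h (Ψ y).1 := hmin _
        have heq : H * θ ^ (n + k) = c * m := by
          rw [hc]; field_simp
        nlinarith
      have h3 := mul_le_mul h1 h2 (hpos y.1).le (by positivity)
      calc Real.exp (birk f n y.1) * h y.1
          ≤ (Real.exp δ * Real.exp (birk f n (Ψ y).1)) * ((1 + c) * h (Ψ y).1) := h3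
      _ = Real.exp δ * (1 + c) * (Real.exp (birk f n (Ψ y).1) * h (Ψ y).1) := by ring
    have hsum : lam ^ n * h x ≤ lam ^ n * (Real.exp δ * (1 + c) * h x') := by
      rw [iter_eigen heig n x]
      calc ∑' y : {y : Space A // shift^[n] y = x}, Real.exp (birk f n y.1) * h y.1
          ≤ ∑' y : {y : Space A // shift^[n] y = x},
              Real.exp δ * (1 + c) * (Real.exp (birk f n (Ψ y).1) * h (Ψ y).1) :=
            Summable.tsum_le_tsum hterm Summable.of_finite Summable.of_finite
      _ = Real.exp δ * (1 + c) *
            ∑' y : {y : Space A // shift^[n] y = x},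
              (Real.exp (birk f n (Ψ y).1) * h (Ψ y).1) := tsum_mul_left
      _ = Real.exp δ * (1 + c) *
            ∑' y' : {y : Space A // shift^[n] y = x'},
              (Real.exp (birk f n y'.1) * h y'.1) := by
            rw [Ψ.tsum_eq (fun y' : {y : Space A // shift^[n] y = x'} =>
              Real.exp (birk f n y'.1) * h y'.1)]
      _ = Real.exp δ * (1 + c) * (lam ^ n * h x') := by rw [← iter_eigen heig n x']
      _ = lam ^ n * (Real.exp δ * (1 + c) * h x') := by ring
    exact le_of_mul_le_mul_left hsum (pow_pos hlam n)
  have hlim : Filter.Tendsto (fun n : ℕ => Real.exp δ * (1 + H * θ ^ (n + k) / m) * h x')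
      Filter.atTop (nhds (Real.exp δ * (1 + 0) * h x')) := by
    apply Filter.Tendsto.mul_const
    apply Filter.Tendsto.const_mul
    apply Filter.Tendsto.const_add
    have h0 : Filter.Tendsto (fun n : ℕ => θ ^ n) Filter.atTop (nhds 0) :=
      tendsto_pow_atTop_nhds_zero_of_lt_one hθ0.le hθ1
    have h1 : Filter.Tendsto (fun n : ℕ => H * θ ^ (n + k) / m) Filter.atTop
        (nhds (H * (0 * θ ^ k) / m)) := by
      apply Filter.Tendsto.div_const
      apply Filter.Tendsto.const_mul
      simp only [pow_add]
      exact h0.mul_const _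
    simpa using h1
  have hfin := ge_of_tendsto' hlim hstep
  simpa using hfin

lemma fiber_card_le (n : ℕ) (x : Space A) [Fintype {y : Space A // shift^[n] y = x}] :
    Fintype.card {y : Space A // shift^[n] y = x} ≤ s₀ ^ n := by
  have hinj : Function.Injective
      (fun y : {y : Space A // shift^[n] y = x} => (fun i : Fin n => y.1.1 i)) := by
    rintro ⟨y, hy⟩ ⟨z, hz⟩ hh
    apply Subtype.ext; apply Subtype.ext; funext i
    rcases lt_or_ge i n with hi | hi
    · exact congrFun hh ⟨i, hi⟩
    · have h1 : y.1 i = x.1 (i - n) := by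
        have hh2 := congrArg (fun w : Space A => w.1 (i - n)) hy
        beta_reduce at hh2
        rw [shift_iter_apply, Nat.sub_add_cancel hi] at hh2
        exact hh2
      have h2 : z.1 i = x.1 (i - n) := by
        have hh2 := congrArg (fun w : Space A => w.1 (i - n)) hz
        beta_reduce at hh2
        rw [shift_iter_apply, Nat.sub_add_cancel hi] at hh2
        exact hh2
      rw [h1, h2]
  calc Fintype.card {y : Space A // shift^[n] y = x}
      ≤ Fintype.card (Fin n → Fin s₀) := Fintype.card_le_of_injective _ hinj
  _ = s₀ ^ n := by simp

/-- Comparison of values of the eigenfunction at arbitrary points. -/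
lemma sup_bound {θ b lam F : ℝ} {M : ℕ} {f h : Space A → ℝ} (hθ0 : 0 < θ) (hθ1 : θ < 1)
    (hlam : 0 < lam) (heig : ∀ x, transfer f h x = lam * h x)
    (hb : 0 ≤ b)
    (hf : ∀ k (ξ η : Space A), (∀ i ≤ k, ξ.1 i = η.1 i) → |f ξ - f η| ≤ b * θ ^ k)
    {H m : ℝ} (hH : 0 ≤ H)
    (hvar : ∀ k (ξ η : Space A), (∀ i ≤ k, ξ.1 i = η.1 i) → |h ξ - h η| ≤ H * θ ^ k)
    (hpos : ∀ ξ, 0 < h ξ)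
    (hm : 0 < m) (hmin : ∀ ξ, m ≤ h ξ)
    (hF : ∀ ξ, |f ξ| ≤ F)
    (hpath : ∀ (a : Fin s₀) (x' : Space A), ∃ z : Space A, shift^[M] z = x' ∧ z.1 0 = a)
    (x x' : Space A) :
    h x ≤ (s₀:ℝ) ^ M * Real.exp (2 * M * F) * Real.exp (b * (θ / (1 - θ))) * h x' := by
  have hF0 : 0 ≤ F := le_trans (abs_nonneg _) (hF x)
  have habsbirk : ∀ (N : ℕ) (y : Space A), |birk f N y| ≤ N * F := by
    intro N y
    calc |birk f N y| ≤ ∑ j ∈ Finset.range N, |f (shift^[j] y)| :=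
          Finset.abs_sum_le_sum_abs _ _
    _ ≤ ∑ j ∈ Finset.range N, F := Finset.sum_le_sum fun j _ => hF _
    _ = N * F := by rw [Finset.sum_const, Finset.card_range]; ring
  set C : ℝ := Real.exp ((M:ℝ) * F) *
    (Real.exp (b * (θ / (1 - θ))) * (Real.exp ((M:ℝ) * F) * (lam ^ M * h x'))) with hC
  have hC0 : 0 ≤ C := by
    have := (hpos x').le
    have := (pow_pos hlam M).le
    positivity
  have hterm : ∀ y : {y : Space A // shift^[M] y = x},
      Real.exp (birk f M y.1) * h y.1 ≤ C := by
    intro y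
    obtain ⟨z, hz1, hz0⟩ := hpath (y.1.1 0) x'
    have hzy : h y.1 ≤ Real.exp (b * (θ / (1 - θ))) * h z := by
      have hag0 : ∀ i ≤ 0, y.1.1 i = z.1 i := by
        intro i hi
        interval_cases i
        exact hz0.symm
      have := core_ratio hθ0 hθ1 hlam heig hb hf hH hvar hpos hm hmin 0 y.1 z hag0
      simpa using this
    have hzb : h z ≤ Real.exp ((M:ℝ) * F) * (lam ^ M * h x') := by
      have hiter := iter_eigen heig M x'
      have hle : Real.exp (birk f M z) * h z ≤ lam ^ M * h x' := by
        rw [hiter]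
        exact Summable.le_tsum (f := fun w : {y : Space A // shift^[M] y = x'} =>
            Real.exp (birk f M w.1) * h w.1) Summable.of_finite
          (⟨z, hz1⟩ : {y : Space A // shift^[M] y = x'})
          (fun w _ => mul_nonneg (Real.exp_pos _).le (hpos _).le)
      have hexp : Real.exp (-((M:ℝ) * F)) ≤ Real.exp (birk f M z) := by
        apply Real.exp_le_exp.mpr
        have := (abs_le.mp (habsbirk M z)).1
        linarith
      have h1 : Real.exp (-((M:ℝ) * F)) * h z ≤ lam ^ M * h x' := by
        calc Real.exp (-((M:ℝ) * F)) * h z ≤ Real.exp (birk f M z) * h z :=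
              mul_le_mul_of_nonneg_right hexp (hpos z).le
        _ ≤ lam ^ M * h x' := hle
      have h2 : h z = Real.exp ((M:ℝ) * F) * (Real.exp (-((M:ℝ) * F)) * h z) := by
        rw [← mul_assoc, ← Real.exp_add]
        simp
      rw [h2]
      exact mul_le_mul_of_nonneg_left h1 (Real.exp_pos _).le
    have hexpy : Real.exp (birk f M y.1) ≤ Real.exp ((M:ℝ) * F) := by
      apply Real.exp_le_exp.mpr
      exact (abs_le.mp (habsbirk M y.1)).2
    calc Real.exp (birk f M y.1) * h y.1
        ≤ Real.exp ((M:ℝ) * F) * (Real.exp (b * (θ / (1 - θ))) * h z) := by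
          apply mul_le_mul hexpy hzy (hpos _).le (Real.exp_pos _).le
    _ ≤ Real.exp ((M:ℝ) * F) *
          (Real.exp (b * (θ / (1 - θ))) * (Real.exp ((M:ℝ) * F) * (lam ^ M * h x'))) := by
          apply mul_le_mul_of_nonneg_left _ (Real.exp_pos _).le
          exact mul_le_mul_of_nonneg_left hzb (Real.exp_pos _).le
  haveI : Fintype {y : Space A // shift^[M] y = x} := Fintype.ofFinite _
  have hsum : lam ^ M * h x ≤ (s₀:ℝ) ^ M * C := by
    rw [iter_eigen heig M x, tsum_fintype]
    calc ∑ y : {y : Space A // shift^[M] y = x}, Real.exp (birk f M y.1) * h y.1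
        ≤ (Finset.univ : Finset {y : Space A // shift^[M] y = x}).card • C :=
          Finset.sum_le_card_nsmul _ _ C (fun y _ => hterm y)
    _ = ((Finset.univ : Finset {y : Space A // shift^[M] y = x}).card : ℝ) * C := by
          rw [nsmul_eq_mul]
    _ ≤ (s₀:ℝ) ^ M * C := by
          apply mul_le_mul_of_nonneg_right _ hC0
          rw [Finset.card_univ]
          calc (Fintype.card {y : Space A // shift^[M] y = x} : ℝ)
              ≤ ((s₀ ^ M : ℕ) : ℝ) := by exact_mod_cast fiber_card_le M x
          _ = (s₀:ℝ) ^ M := by push_cast; ring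
  have hsum2 : lam ^ M * h x ≤
      lam ^ M * ((s₀:ℝ) ^ M * Real.exp (2 * M * F) * Real.exp (b * (θ / (1 - θ))) * h x') := by
    calc lam ^ M * h x ≤ (s₀:ℝ) ^ M * C := hsum
    _ = lam ^ M * ((s₀:ℝ) ^ M * (Real.exp ((M:ℝ) * F) * Real.exp ((M:ℝ) * F)) *
          Real.exp (b * (θ / (1 - θ))) * h x') := by rw [hC]; ring
    _ = lam ^ M * ((s₀:ℝ) ^ M * Real.exp (2 * M * F) * Real.exp (b * (θ / (1 - θ))) * h x') := by
          rw [← Real.exp_add]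
          ring_nf
  exact le_of_mul_le_mul_left hsum2 (pow_pos hlam M)


lemma pow_pos_path (h01 : ∀ i j, A i j = 0 ∨ A i j = 1) :
    ∀ (m : ℕ) (i j : Fin s₀), 0 < (A ^ m) i j →
      ∃ c : ℕ → Fin s₀, c 0 = i ∧ c m = j ∧ ∀ l, l < m → A (c l) (c (l + 1)) = 1 := by
  intro m
  induction m with
  | zero =>
    intro i j hpos
    rw [pow_zero] at hpos
    have hij : i = j := by
      by_contra hne
      rw [Matrix.one_apply_ne hne] at hpos
      exact lt_irrefl 0 hpos
    exact ⟨fun _ => i, rfl, hij.symm ▸ rfl, fun l hl => absurd hl (Nat.not_lt_zero l)⟩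
  | succ m ih =>
    intro i j hpos
    rw [pow_succ, Matrix.mul_apply] at hpos
    obtain ⟨t, _, ht⟩ : ∃ t ∈ Finset.univ, 0 < (A ^ m) i t * A t j := by
      apply Finset.exists_lt_of_sum_lt (f := fun _ => (0:ℕ))
      simpa using hpos
    have h1 : 0 < (A ^ m) i t := by
      rcases Nat.eq_zero_or_pos ((A ^ m) i t) with hc | hc
      · rw [hc, zero_mul] at ht; exact absurd ht (lt_irrefl 0)
      · exact hc
    have h2 : A t j = 1 := by
      rcases h01 t j with hc | hc
      · rw [hc, mul_zero] at ht; exact absurd ht (lt_irrefl 0)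
      · exact hc
    obtain ⟨c, hc0, hcm, hstep⟩ := ih i t h1
    set cc : ℕ → Fin s₀ := fun l => if l ≤ m then c l else j with hcc
    have hcca : ∀ l, l ≤ m → cc l = c l := by
      intro l hl; simp [hcc, hl]
    have hccb : ∀ l, ¬ (l ≤ m) → cc l = j := by
      intro l hl; simp [hcc, hl]
    refine ⟨cc, ?_, ?_, ?_⟩
    · rw [hcca 0 (Nat.zero_le m)]; exact hc0
    · exact hccb (m+1) (by omega)
    · intro l hl
      rcases lt_or_ge l m with hlm | hlm
      · rw [hcca l (by omega), hcca (l+1) (by omega)]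
        exact hstep l hlm
      · have hleq : l = m := by omega
        subst hleq
        rw [hcca l (le_refl l), hccb (l+1) (by omega), hcm]
        exact h2

lemma exists_preimage_iter {M : ℕ} (hM : 0 < M) (h01 : ∀ i j, A i j = 0 ∨ A i j = 1)
    (hap : ∀ i j, 0 < (A ^ M) i j) (a : Fin s₀) (x : Space A) :
    ∃ z : Space A, shift^[M] z = x ∧ z.1 0 = a := by
  obtain ⟨c, hc0, hcM, hstep⟩ := pow_pos_path h01 M a (x.1 0) (hap a (x.1 0))
  refine ⟨⟨glue M c x.1, glue_adm (fun i hi => hstep i (by omega)) x.2 hcM⟩, ?_, ?_⟩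
  · apply Subtype.ext; funext i
    refine (shift_iter_apply M _ i).trans ?_
    exact glue_shift _ _ i
  · show glue M c x.1 0 = a
    unfold glue
    rw [if_pos hM]
    exact hc0

instance spaceCompact : CompactSpace (Space A) := by
  have hclosed : IsClosed {ξ : ℕ → Fin s₀ | ∀ i, A (ξ i) (ξ (i+1)) = 1} := by
    have heq : {ξ : ℕ → Fin s₀ | ∀ i, A (ξ i) (ξ (i+1)) = 1}
        = ⋂ i, {ξ : ℕ → Fin s₀ | A (ξ i) (ξ (i+1)) = 1} := by
      ext ξ; simp [Set.mem_iInter]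
    rw [heq]
    refine isClosed_iInter fun i => ?_
    have heq2 : {ξ : ℕ → Fin s₀ | A (ξ i) (ξ (i+1)) = 1}
        = (fun ξ : ℕ → Fin s₀ => (ξ i, ξ (i+1))) ⁻¹' {p : Fin s₀ × Fin s₀ | A p.1 p.2 = 1} :=
      rfl
    rw [heq2]
    exact IsClosed.preimage ((continuous_apply i).prodMk (continuous_apply (i+1)))
      (isClosed_discrete _)
  exact isCompact_iff_compactSpace.mp hclosed.isCompact

lemma continuous_of_var {θ : ℝ} (hθ0 : 0 < θ) (hθ1 : θ < 1) {g : Space A → ℝ} {H : ℝ}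
    (hH : 0 ≤ H)
    (hvar : ∀ k (ξ η : Space A), (∀ i ≤ k, ξ.1 i = η.1 i) → |g ξ - g η| ≤ H * θ ^ k) :
    Continuous g := by
  rw [continuous_iff_continuousAt]
  intro ξ
  rw [ContinuousAt, Metric.tendsto_nhds]
  intro ε hε
  have htend : Filter.Tendsto (fun k : ℕ => H * θ ^ k) Filter.atTop (nhds 0) := by
    have h0 : Filter.Tendsto (fun k : ℕ => θ ^ k) Filter.atTop (nhds 0) :=
      tendsto_pow_atTop_nhds_zero_of_lt_one hθ0.le hθ1
    simpa using h0.const_mul H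
  obtain ⟨k, hk⟩ := (htend.eventually (gt_mem_nhds hε)).exists
  have hUopen : IsOpen {η : Space A | ∀ i : Fin (k+1), η.1 (i:ℕ) = ξ.1 (i:ℕ)} := by
    have heq : {η : Space A | ∀ i : Fin (k+1), η.1 (i:ℕ) = ξ.1 (i:ℕ)}
        = ⋂ i : Fin (k+1), {η : Space A | η.1 (i:ℕ) = ξ.1 (i:ℕ)} := by
      ext η; simp [Set.mem_iInter]
    rw [heq]
    refine isOpen_iInter_of_finite fun i => ?_
    have heq2 : {η : Space A | η.1 (i:ℕ) = ξ.1 (i:ℕ)}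
        = (fun η : Space A => η.1 (i:ℕ)) ⁻¹' {ξ.1 (i:ℕ)} := rfl
    rw [heq2]
    exact IsOpen.preimage ((continuous_apply (i:ℕ)).comp continuous_subtype_val)
      (isOpen_discrete _)
  have hmem : ξ ∈ {η : Space A | ∀ i : Fin (k+1), η.1 (i:ℕ) = ξ.1 (i:ℕ)} := fun i => rfl
  filter_upwards [hUopen.mem_nhds hmem] with η hη
  have hagree : ∀ i ≤ k, η.1 i = ξ.1 i := by
    intro i hi
    exact hη ⟨i, by omega⟩
  rw [Real.dist_eq]
  calc |g η - g ξ| ≤ H * θ ^ k := hvar k η ξ hagree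
  _ < ε := hk

end Aux



set_option maxHeartbeats 1000000 in
theorem statement2
    {s₀ M : ℕ} {A : Matrix (Fin s₀) (Fin s₀) ℕ} {θ : ℝ}
    (hs₀ : 2 ≤ s₀) (h01 : ∀ i j, A i j = 0 ∨ A i j = 1) (hM : 0 < M)
    (hap : ∀ i j, 0 < (A ^ M) i j) (hθ0 : 0 < θ) (hθ1 : θ < 1)
    (f : Space A → ℝ) (hf : MemF θ f)
    (lam : ℝ) (ν : Measure (Space A)) (h : Space A → ℝ) (hRPF : IsRPF θ f lam ν h) :
    fNorm θ h ≤ 6 * (s₀ : ℝ) ^ M * max 1 (holderNorm θ f) / (θ ^ 2 * (1 - θ)) *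
      Real.exp (4 * max 1 (holderNorm θ f) / (1 - θ)) *
      Real.exp (2 * (M : ℝ) * supNorm f) := by
  obtain ⟨hlam, hprob, hdual, hMemF, hpos, heig, hint1⟩ := hRPF
  haveI := hprob
  haveI hne : Nonempty (Space A) := by
    by_contra hc
    rw [not_nonempty_iff] at hc
    have h1 : (ν Set.univ) = 1 := measure_univ
    rw [Set.univ_eq_empty_iff.mpr hc, measure_empty] at h1
    exact zero_ne_one h1
  have h1θ : 0 < 1 - θ := by linarith
  set b : ℝ := max 1 (holderNorm θ f) with hbdef
  have hb1 : (1:ℝ) ≤ b := le_max_left _ _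
  have hb0 : (0:ℝ) ≤ b := by linarith
  have hfH : ∀ k (ξ η : Space A), (∀ i ≤ k, ξ.1 i = η.1 i) → |f ξ - f η| ≤ b * θ ^ k := by
    intro k ξ η hag
    calc |f ξ - f η| ≤ holderNorm θ f * θ ^ k := dist_le_holder hθ0 hf k ξ η hag
    _ ≤ b * θ ^ k := mul_le_mul_of_nonneg_right (le_max_right _ _) (pow_pos hθ0 k).le
  set F : ℝ := supNorm f with hFdef
  have hFb : ∀ ξ, |f ξ| ≤ F := abs_le_supNorm hf
  have hF0 : (0:ℝ) ≤ F := ENNReal.toReal_nonneg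
  set H : ℝ := holderNorm θ h with hHdef
  have hH0 : (0:ℝ) ≤ H := ENNReal.toReal_nonneg
  have hvar : ∀ k (ξ η : Space A), (∀ i ≤ k, ξ.1 i = η.1 i) → |h ξ - h η| ≤ H * θ ^ k :=
    dist_le_holder hθ0 hMemF
  set S : ℝ := supNorm h with hSdef
  have hSN : supNorm h = S := rfl
  have hS0 : (0:ℝ) ≤ S := ENNReal.toReal_nonneg
  have hhS : ∀ ξ, h ξ ≤ S := fun ξ => le_trans (le_abs_self _) (abs_le_supNorm hMemF ξ)
  have hcont : Continuous h := continuous_of_var hθ0 hθ1 hH0 hvar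
  obtain ⟨ξ₀, -, hminOn⟩ :=
    isCompact_univ.exists_isMinOn Set.univ_nonempty hcont.continuousOn
  set m : ℝ := h ξ₀ with hmdef
  have hmin : ∀ ξ, m ≤ h ξ := fun ξ => isMinOn_iff.mp hminOn ξ (Set.mem_univ ξ)
  have hm : 0 < m := hpos ξ₀
  have hinth : Integrable h ν := by
    apply MeasureTheory.Integrable.mono' (integrable_const S) hcont.aestronglyMeasurable
    exact Filter.Eventually.of_forall fun ξ => by
      rw [Real.norm_eq_abs]; exact abs_le_supNorm hMemF ξ
  have hm1 : m ≤ 1 := by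
    have h1 : ∫ _, m ∂ν ≤ ∫ x, h x ∂ν := integral_mono (integrable_const m) hinth hmin
    rw [integral_const] at h1
    simp only [measure_univ, probReal_univ, ENNReal.toReal_one, one_smul] at h1
    linarith [h1, le_of_eq hint1]
  set D : ℝ := b * (θ / (1 - θ)) with hDdef
  have hD0 : (0:ℝ) ≤ D := mul_nonneg hb0 (div_nonneg hθ0.le h1θ.le)
  set B : ℝ := b / (1 - θ) with hBdef
  have hDB : D ≤ B := by
    rw [hDdef, hBdef, show b * (θ / (1 - θ)) = (b * θ) / (1 - θ) from by ring]
    apply div_le_div_of_nonneg_right _ h1θ.le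
    nlinarith [hb0, hθ1]
  have hB1 : (1:ℝ) ≤ B := by
    rw [hBdef, le_div_iff₀ h1θ]
    linarith
  have hB0 : (0:ℝ) ≤ B := by linarith
  have hpath := exists_preimage_iter hM h01 hap
  set K : ℝ := (s₀:ℝ) ^ M * Real.exp (2 * M * F) with hKdef
  have hs₀0 : (0:ℝ) < (s₀:ℝ) := by
    have : (0:ℕ) < s₀ := by omega
    exact_mod_cast this
  have hK0 : (0:ℝ) < K := by positivity
  clear_value b F H S m D B K
  -- sup bound
  have hSK : S ≤ K * Real.exp B := by
    rw [hSdef]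
    apply supNorm_le (mul_nonneg hK0.le (Real.exp_pos _).le)
    intro ξ
    rw [abs_of_pos (hpos ξ)]
    have hsb := sup_bound hθ0 hθ1 hlam heig hb0 hfH hH0 hvar hpos hm hmin hFb hpath ξ ξ₀
    rw [← hDdef] at hsb
    calc h ξ ≤ (s₀:ℝ) ^ M * Real.exp (2 * M * F) * Real.exp D * h ξ₀ := hsb
    _ = K * Real.exp D * m := by rw [hKdef, hmdef]
    _ ≤ K * Real.exp B * 1 := by
        apply mul_le_mul _ hm1 hm.le (mul_nonneg hK0.le (Real.exp_pos _).le)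
        apply mul_le_mul_of_nonneg_left (Real.exp_le_exp.mpr hDB) hK0.le
    _ = K * Real.exp B := mul_one _
  -- Hölder bound
  have hexpB1 : (1:ℝ) ≤ Real.exp B := by
    rw [← Real.exp_zero]
    exact Real.exp_le_exp.mpr hB0
  have hHbd : holderNorm θ h ≤ S * (B * Real.exp B) := by
    apply holderNorm_le hθ0 (mul_nonneg hS0 (mul_nonneg hB0 (Real.exp_pos _).le))
    intro k ξ η hag
    have key : ∀ ξ η : Space A, (∀ i ≤ k, ξ.1 i = η.1 i) →
        h ξ - h η ≤ S * (B * Real.exp B) * θ ^ k := by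
      intro ξ η hag
      have hc := core_ratio hθ0 hθ1 hlam heig hb0 hfH hH0 hvar hpos hm hmin k ξ η hag
      rw [← hDdef] at hc
      set t : ℝ := D * θ ^ k with htdef
      have hθk0 : (0:ℝ) < θ ^ k := pow_pos hθ0 k
      have hθk1 : θ ^ k ≤ 1 := pow_le_one₀ hθ0.le hθ1.le
      have ht0 : 0 ≤ t := mul_nonneg hD0 hθk0.le
      have htB : t ≤ B := by
        calc t = D * θ ^ k := rfl
        _ ≤ D * 1 := mul_le_mul_of_nonneg_left hθk1 hD0
        _ = D := mul_one D
        _ ≤ B := hDB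
      have hexpt : Real.exp t ≤ Real.exp B := Real.exp_le_exp.mpr htB
      -- exp t - 1 ≤ t * exp t
      have e1 : Real.exp t - 1 ≤ t * Real.exp t := by
        have ha := Real.add_one_le_exp (-t)
        rw [Real.exp_neg] at ha
        have hb' := Real.exp_pos t
        have h2 := mul_le_mul_of_nonneg_right ha hb'.le
        have h3 : ((Real.exp t)⁻¹) * Real.exp t = 1 := inv_mul_cancel₀ (ne_of_gt hb')
        nlinarith [h2, h3]
      have step1 : h ξ - h η ≤ (Real.exp t - 1) * h η := by
        have := hc
        nlinarith [this]
      calc h ξ - h η ≤ (Real.exp t - 1) * h η := step1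
      _ ≤ (t * Real.exp t) * h η := by
          apply mul_le_mul_of_nonneg_right e1 (hpos η).le
      _ ≤ (t * Real.exp B) * S := by
          apply mul_le_mul _ (hhS η) (hpos η).le (mul_nonneg ht0 (Real.exp_pos _).le)
          exact mul_le_mul_of_nonneg_left hexpt ht0
      _ = (D * Real.exp B * S) * θ ^ k := by rw [htdef]; ring
      _ ≤ (B * Real.exp B * S) * θ ^ k := by
          apply mul_le_mul_of_nonneg_right _ hθk0.le
          apply mul_le_mul_of_nonneg_right _ hS0
          exact mul_le_mul_of_nonneg_right hDB (Real.exp_pos B).le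
      _ = S * (B * Real.exp B) * θ ^ k := by ring
    have hsym : ∀ i ≤ k, η.1 i = ξ.1 i := fun i hi => (hag i hi).symm
    exact abs_sub_le_iff.mpr ⟨key ξ η hag, key η ξ hsym⟩
  -- combine
  have hfN : fNorm θ h ≤ K * Real.exp B * (1 + B * Real.exp B) := by
    rw [fNorm]
    calc holderNorm θ h + supNorm h ≤ S * (B * Real.exp B) + S := by
          rw [hSN]; linarith [hHbd]
    _ = S * (1 + B * Real.exp B) := by ring
    _ ≤ (K * Real.exp B) * (1 + B * Real.exp B) := by
          apply mul_le_mul_of_nonneg_right hSK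
          nlinarith [mul_nonneg hB0 (Real.exp_pos B).le]
  -- final numeric comparison
  have hfinal : K * Real.exp B * (1 + B * Real.exp B) ≤
      6 * (s₀ : ℝ) ^ M * b / (θ ^ 2 * (1 - θ)) *
        Real.exp (4 * b / (1 - θ)) * Real.exp (2 * (M : ℝ) * F) := by
    have h4B : 4 * b / (1 - θ) = 4 * B := by rw [hBdef]; ring
    rw [h4B]
    have e2 : 1 + B * Real.exp B ≤ 2 * B * Real.exp B := by
      nlinarith [hexpB1, hB1]
    have e3 : Real.exp B * Real.exp B = Real.exp (2 * B) := by
      rw [← Real.exp_add]; ring_nf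
    have hcoef : 2 * B ≤ 6 * b / (θ ^ 2 * (1 - θ)) := by
      rw [hBdef, show 2 * (b / (1 - θ)) = (2 * b) / (1 - θ) from by ring]
      rw [div_le_div_iff₀ h1θ (mul_pos (pow_pos hθ0 2) h1θ)]
      have hθ2 : θ ^ 2 ≤ 1 := by nlinarith
      nlinarith [mul_nonneg (mul_nonneg hb0 h1θ.le) (sub_nonneg.mpr hθ2),
        mul_nonneg hb0 h1θ.le]
    have hexp24 : Real.exp (2 * B) ≤ Real.exp (4 * B) := by
      apply Real.exp_le_exp.mpr
      linarith
    calc K * Real.exp B * (1 + B * Real.exp B)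
        ≤ K * Real.exp B * (2 * B * Real.exp B) := by
          apply mul_le_mul_of_nonneg_left e2 (mul_nonneg hK0.le (Real.exp_pos _).le)
    _ = K * (2 * B) * (Real.exp B * Real.exp B) := by ring
    _ = K * (2 * B) * Real.exp (2 * B) := by rw [e3]
    _ ≤ K * (6 * b / (θ ^ 2 * (1 - θ))) * Real.exp (4 * B) := by
          apply mul_le_mul _ hexp24 (Real.exp_pos _).le _
          · exact mul_le_mul_of_nonneg_left hcoef hK0.le
          · apply mul_nonneg hK0.le
            apply div_nonneg (by linarith) (mul_pos (pow_pos hθ0 2) h1θ).le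
    _ = 6 * (s₀ : ℝ) ^ M * b / (θ ^ 2 * (1 - θ)) * Real.exp (4 * B) *
          Real.exp (2 * (M : ℝ) * F) := by
          rw [hKdef]; ring
  linarith [hfN, hfinal]

end SFT
end

section
/- Under the stated setup, for every q with |q| ≤ q₀ and every integer n ≥ 0, max{ 0, e^{−2 q₀ C₀ n} − D ρⁿ } ≤ h_q(x) ≤ e^{2 q₀ C₀ n} + D ρⁿ for all x ∈ Σ_A⁺. -/
open MeasureTheory Real ENNReal

namespace SFT

variable {s₀ : ℕ} {A : Matrix (Fin s₀) (Fin s₀) ℕ}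

theorem statement12
    {s₀ M : ℕ} {A : Matrix (Fin s₀) (Fin s₀) ℕ} {θ : ℝ}
    (hs₀ : 2 ≤ s₀) (h01 : ∀ i j, A i j = 0 ∨ A i j = 1) (hM : 0 < M)
    (hap : ∀ i j, 0 < (A ^ M) i j) (hθ0 : 0 < θ) (hθ1 : θ < 1)
    (φ ψ : Space A → ℝ) (hφ : MemF θ φ) (hψ : MemF θ ψ)
    (hL1 : transfer φ (fun _ => 1) = fun _ => 1) (hψ0 : ∀ x, 0 ≤ ψ x)
    (hcoh : ¬ CohomToConst ψ)
    (μ : Measure (Space A)) (hμ : IsEqm φ μ) (ψt : ℝ) (hψt : ψt = ∫ x, ψ x ∂μ)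
    (b C₀ : ℝ) (hb : b = max 1 (holderNorm θ ψ))
    (hC₀ : C₀ = fNorm θ φ + 2 * max (supNorm ψ) 1)
    (lam : ℝ → ℝ) (ν : ℝ → Measure (Space A)) (hq : ℝ → Space A → ℝ)
    (hRPF : ∀ q : ℝ, IsRPF θ (fun x => φ x + q * ψ x) (lam q) (ν q) (hq q))
    (D ρ : ℝ) (hD1 : 1 ≤ D) (hρ : ρ ∈ Set.Ioo (0:ℝ) 1)
    (hgap : ∀ q : ℝ, |q| ≤ 1 / b → ∀ g : Space A → ℝ, MemF θ g → ∀ n : ℕ,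
      fNorm θ (fun x => (transfer (fun y => φ y + q * ψ y))^[n] g x / lam q ^ n
          - hq q x * ∫ y, g y ∂(ν q)) ≤ D * ρ ^ n * fNorm θ g)
    (hLψ : ∀ n : ℕ, supNorm (fun x => (transfer φ)^[n] ψ x - ψt) ≤ C₀ * D * ρ ^ n)
    (q₀ : ℝ) (hq₀pos : 0 < q₀) (hq₀b : q₀ ≤ 1 / b) :
    ∀ q : ℝ, |q| ≤ q₀ → ∀ (n : ℕ) (x : Space A),
      max 0 (Real.exp (-(2 * q₀ * C₀ * n)) - D * ρ ^ n) ≤ hq q x ∧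
      hq q x ≤ Real.exp (2 * q₀ * C₀ * n) + D * ρ ^ n := by
  intro q hqq₀ n x
  obtain ⟨hρ0, hρ1⟩ := hρ
  obtain ⟨hlam_pos, hνprob, hνdual, hhF, hhpos, hheig, hhint⟩ := hRPF q
  haveI := hνprob
  haveI hne : Nonempty (Space A) := ⟨x⟩
  have hq1b : |q| ≤ 1 / b := hqq₀.trans hq₀b
  -- pointwise bound from finite eSup
  have supb : ∀ (g : Space A → ℝ), eSup g < ⊤ → ∀ ξ : Space A, |g ξ| ≤ supNorm g := by
    intro g hg ξ
    have h1 : ENNReal.ofReal |g ξ| ≤ eSup g := le_iSup (fun ξ : Space A => ENNReal.ofReal |g ξ|) ξ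
    calc |g ξ| = (ENNReal.ofReal |g ξ|).toReal := (ENNReal.toReal_ofReal (abs_nonneg _)).symm
      _ ≤ (eSup g).toReal := ENNReal.toReal_mono hg.ne h1
  have hsψ : eSup ψ < ⊤ := lt_of_le_of_lt le_add_self hψ
  have hψb : ∀ y, |ψ y| ≤ supNorm ψ := supb ψ hsψ
  set a : ℝ := q₀ * max (supNorm ψ) 1 with ha
  have ha0 : 0 ≤ a := mul_nonneg hq₀pos.le (le_trans zero_le_one (le_max_right _ _))
  have haψ : ∀ y, |q * ψ y| ≤ a := by
    intro y
    rw [abs_mul]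
    exact mul_le_mul hqq₀ ((hψb y).trans (le_max_left _ _)) (abs_nonneg _) hq₀pos.le
  have hfφ0 : 0 ≤ fNorm θ φ := add_nonneg ENNReal.toReal_nonneg ENNReal.toReal_nonneg
  have haC : a ≤ q₀ * C₀ := by
    have h1 : (0:ℝ) ≤ max (supNorm ψ) 1 := le_trans zero_le_one (le_max_right _ _)
    have h2 : max (supNorm ψ) 1 ≤ C₀ := by rw [hC₀]; linarith
    exact mul_le_mul_of_nonneg_left h2 hq₀pos.le
  -- sum of exp φ over fibers is 1
  have hsum1 : ∀ z : Space A, ∑' y : {y : Space A // shift y = z}, Real.exp (φ y.1) = 1 := by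
    intro z
    have h := congrFun hL1 z
    simpa [transfer] using h
  -- key transfer bound
  have key : ∀ (g : Space A → ℝ) (m Mv : ℝ), 0 ≤ m → (∀ y, m ≤ g y ∧ g y ≤ Mv) →
      ∀ z : Space A, m * Real.exp (-a) ≤ transfer (fun y => φ y + q * ψ y) g z ∧
        transfer (fun y => φ y + q * ψ y) g z ≤ Mv * Real.exp a := by
    intro g m Mv hm hg z
    haveI hFin : Fintype {y : Space A // shift y = z} := Fintype.ofFinite _
    have hts : transfer (fun y => φ y + q * ψ y) g z
        = ∑ y : {y : Space A // shift y = z}, Real.exp (φ y.1 + q * ψ y.1) * g y.1 := by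
      simp [transfer, tsum_fintype]
    have hφs : ∑ y : {y : Space A // shift y = z}, Real.exp (φ y.1) = 1 := by
      have := hsum1 z; rwa [tsum_fintype] at this
    have hterm : ∀ y : {y : Space A // shift y = z},
        Real.exp (φ y.1) * (m * Real.exp (-a)) ≤ Real.exp (φ y.1 + q * ψ y.1) * g y.1 ∧
        Real.exp (φ y.1 + q * ψ y.1) * g y.1 ≤ Real.exp (φ y.1) * (Mv * Real.exp a) := by
      intro y
      have hab := abs_le.mp (haψ y.1)
      have h1 : Real.exp (-a) ≤ Real.exp (q * ψ y.1) := Real.exp_le_exp.mpr hab.1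
      have h2 : Real.exp (q * ψ y.1) ≤ Real.exp a := Real.exp_le_exp.mpr hab.2
      have hgy := hg y.1
      have hrw : Real.exp (φ y.1 + q * ψ y.1) * g y.1
          = Real.exp (φ y.1) * (Real.exp (q * ψ y.1) * g y.1) := by
        rw [Real.exp_add]; ring
      constructor
      · rw [hrw]
        refine mul_le_mul_of_nonneg_left ?_ (Real.exp_pos _).le
        calc m * Real.exp (-a) ≤ m * Real.exp (q * ψ y.1) := mul_le_mul_of_nonneg_left h1 hm
          _ ≤ g y.1 * Real.exp (q * ψ y.1) :=
              mul_le_mul_of_nonneg_right hgy.1 (Real.exp_pos _).le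
          _ = Real.exp (q * ψ y.1) * g y.1 := mul_comm _ _
      · rw [hrw]
        refine mul_le_mul_of_nonneg_left ?_ (Real.exp_pos _).le
        calc Real.exp (q * ψ y.1) * g y.1 ≤ Real.exp a * g y.1 :=
              mul_le_mul_of_nonneg_right h2 (hm.trans hgy.1)
          _ ≤ Real.exp a * Mv := mul_le_mul_of_nonneg_left hgy.2 (Real.exp_pos _).le
          _ = Mv * Real.exp a := mul_comm _ _
    constructor
    · rw [hts]
      calc m * Real.exp (-a)
          = ∑ y : {y : Space A // shift y = z}, Real.exp (φ y.1) * (m * Real.exp (-a)) := by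
            rw [← Finset.sum_mul, hφs, one_mul]
        _ ≤ _ := Finset.sum_le_sum fun y _ => (hterm y).1
    · rw [hts]
      calc ∑ y : {y : Space A // shift y = z}, Real.exp (φ y.1 + q * ψ y.1) * g y.1
          ≤ ∑ y : {y : Space A // shift y = z}, Real.exp (φ y.1) * (Mv * Real.exp a) :=
            Finset.sum_le_sum fun y _ => (hterm y).2
        _ = Mv * Real.exp a := by rw [← Finset.sum_mul, hφs, one_mul]
  -- iterated bounds
  have iterb : ∀ (k : ℕ) (z : Space A),
      Real.exp (-(k * a)) ≤ (transfer (fun y => φ y + q * ψ y))^[k] (fun _ => (1:ℝ)) z ∧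
      (transfer (fun y => φ y + q * ψ y))^[k] (fun _ => (1:ℝ)) z ≤ Real.exp (k * a) := by
    intro k
    induction k with
    | zero => intro z; simp
    | succ m ih =>
      intro z
      have hk := key ((transfer (fun y => φ y + q * ψ y))^[m] (fun _ => (1:ℝ)))
        (Real.exp (-(m * a))) (Real.exp (m * a)) (Real.exp_pos _).le (fun y => ih y) z
      rw [Function.iterate_succ_apply']
      refine ⟨le_trans (le_of_eq ?_) hk.1, hk.2.trans (le_of_eq ?_)⟩
      · rw [← Real.exp_add]; congr 1; push_cast; ring
      · rw [← Real.exp_add]; congr 1; push_cast; ring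
  -- eigenvalue bounds
  have hlam_eq : lam q = ∫ z, transfer (fun y => φ y + q * ψ y) (fun _ => (1:ℝ)) z ∂(ν q) := by
    have h1 := hνdual (fun _ => (1:ℝ)) continuous_const
    simpa using h1.symm
  have hInt : Integrable (fun z => transfer (fun y => φ y + q * ψ y) (fun _ => (1:ℝ)) z)
      (ν q) := by
    by_contra hc
    rw [integral_undef hc] at hlam_eq
    exact hlam_pos.ne' hlam_eq
  have hT1 := key (fun _ => (1:ℝ)) 1 1 zero_le_one (fun y => ⟨le_rfl, le_rfl⟩)
  have hlam_le : lam q ≤ Real.exp a := by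
    rw [hlam_eq]
    calc (∫ z, transfer (fun y => φ y + q * ψ y) (fun _ => (1:ℝ)) z ∂(ν q))
        ≤ ∫ _, 1 * Real.exp a ∂(ν q) :=
          integral_mono hInt (integrable_const _) (fun z => (hT1 z).2)
      _ = Real.exp a := by simp
  have hlam_ge : Real.exp (-a) ≤ lam q := by
    rw [hlam_eq]
    calc Real.exp (-a) = ∫ _, 1 * Real.exp (-a) ∂(ν q) := by simp
      _ ≤ _ := integral_mono (integrable_const _) hInt (fun z => (hT1 z).1)
  have hln : 0 < lam q ^ n := pow_pos hlam_pos n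
  -- MemF and fNorm of the constant 1
  have he0 : eHolder θ (fun _ : Space A => (1:ℝ)) = 0 := by
    refine le_antisymm (iSup_le fun k => ?_) zero_le
    have hv : evar (fun _ : Space A => (1:ℝ)) k = 0 := by
      refine le_antisymm ?_ zero_le
      refine iSup_le fun ξ => iSup_le fun η => iSup_le fun _ => ?_
      simp
    rw [hv, ENNReal.zero_div]
  have hMemF1 : MemF θ (fun _ : Space A => (1:ℝ)) := by
    unfold MemF
    rw [he0, zero_add]
    exact lt_of_le_of_lt (iSup_le fun ξ => by simp) ENNReal.one_lt_top
  have hfN1 : fNorm θ (fun _ : Space A => (1:ℝ)) = 1 := by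
    have hs : eSup (fun _ : Space A => (1:ℝ)) = 1 := by
      unfold eSup; simp
    unfold fNorm holderNorm supNorm
    rw [he0, hs]
    simp
  -- apply the spectral gap with g = 1
  have hgap1 := hgap q hq1b (fun _ => (1:ℝ)) hMemF1 n
  rw [hfN1, mul_one] at hgap1
  have hint1 : (∫ y, (fun _ : Space A => (1:ℝ)) y ∂(ν q)) = 1 := by simp
  set G : Space A → ℝ := fun ξ =>
    (transfer (fun y => φ y + q * ψ y))^[n] (fun _ => (1:ℝ)) ξ / lam q ^ n - hq q ξ with hGdef
  have hGfun : (fun x => (transfer (fun y => φ y + q * ψ y))^[n] (fun _ => (1:ℝ)) x / lam q ^ n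
      - hq q x * ∫ y, (fun _ : Space A => (1:ℝ)) y ∂(ν q)) = G := by
    funext ξ; rw [hint1, mul_one]
  rw [hGfun] at hgap1
  -- eSup G is finite
  have hhsup : eSup (hq q) < ⊤ := lt_of_le_of_lt le_add_self hhF
  have hTn := iterb n
  have hGb : ∀ ξ : Space A, |G ξ| ≤ Real.exp (n * a) / lam q ^ n + supNorm (hq q) := by
    intro ξ
    have habs : |(transfer (fun y => φ y + q * ψ y))^[n] (fun _ => (1:ℝ)) ξ|
        ≤ Real.exp (n * a) := by
      refine abs_le.mpr ⟨?_, (hTn ξ).2⟩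
      have := (hTn ξ).1
      have h2 := Real.exp_pos (-((n:ℝ) * a))
      have h3 := Real.exp_pos ((n:ℝ) * a)
      linarith
    have h1 : |(transfer (fun y => φ y + q * ψ y))^[n] (fun _ => (1:ℝ)) ξ / lam q ^ n|
        ≤ Real.exp (n * a) / lam q ^ n := by
      rw [abs_div, abs_of_pos hln]
      exact div_le_div_of_nonneg_right habs hln.le
    calc |G ξ| ≤ |(transfer (fun y => φ y + q * ψ y))^[n] (fun _ => (1:ℝ)) ξ / lam q ^ n|
          + |hq q ξ| := abs_sub _ _
      _ ≤ Real.exp (n * a) / lam q ^ n + supNorm (hq q) :=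
          add_le_add h1 (supb (hq q) hhsup ξ)
  have hGsup : eSup G < ⊤ :=
    lt_of_le_of_lt (iSup_le fun ξ => ENNReal.ofReal_le_ofReal (hGb ξ)) ENNReal.ofReal_lt_top
  have hGpt : |G x| ≤ D * ρ ^ n := by
    have h1 := supb G hGsup x
    have h2 : supNorm G ≤ fNorm θ G := by
      unfold fNorm holderNorm
      linarith [ENNReal.toReal_nonneg (a := eHolder θ G)]
    exact h1.trans (h2.trans hgap1)
  have habs := abs_le.mp hGpt
  have hTnx := hTn x
  have hGx : G x = (transfer (fun y => φ y + q * ψ y))^[n] (fun _ => (1:ℝ)) x / lam q ^ n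
      - hq q x := rfl
  have hna : (0:ℝ) ≤ (n:ℝ) := Nat.cast_nonneg n
  have hexp_le : 2 * ((n:ℝ) * a) ≤ 2 * q₀ * C₀ * n := by
    nlinarith [mul_le_mul_of_nonneg_left haC hna]
  have hlp_ge : Real.exp (-((n:ℝ) * a)) ≤ lam q ^ n := by
    calc Real.exp (-((n:ℝ) * a)) = Real.exp (-a) ^ n := by
          rw [← Real.exp_nat_mul]; congr 1; ring
      _ ≤ lam q ^ n := pow_le_pow_left₀ (Real.exp_pos _).le hlam_ge n
  have hlp_le : lam q ^ n ≤ Real.exp ((n:ℝ) * a) := by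
    calc lam q ^ n ≤ Real.exp a ^ n := pow_le_pow_left₀ hlam_pos.le hlam_le n
      _ = Real.exp ((n:ℝ) * a) := (Real.exp_nat_mul a n).symm
  have h2up : (transfer (fun y => φ y + q * ψ y))^[n] (fun _ => (1:ℝ)) x / lam q ^ n
      ≤ Real.exp (2 * ((n:ℝ) * a)) := by
    rw [div_le_iff₀ hln]
    calc (transfer (fun y => φ y + q * ψ y))^[n] (fun _ => (1:ℝ)) x
        ≤ Real.exp ((n:ℝ) * a) := hTnx.2
      _ = Real.exp (2 * ((n:ℝ) * a)) * Real.exp (-((n:ℝ) * a)) := by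
          rw [← Real.exp_add]; congr 1; ring
      _ ≤ Real.exp (2 * ((n:ℝ) * a)) * lam q ^ n :=
          mul_le_mul_of_nonneg_left hlp_ge (Real.exp_pos _).le
  have h2lo : Real.exp (-(2 * ((n:ℝ) * a)))
      ≤ (transfer (fun y => φ y + q * ψ y))^[n] (fun _ => (1:ℝ)) x / lam q ^ n := by
    rw [le_div_iff₀ hln]
    calc Real.exp (-(2 * ((n:ℝ) * a))) * lam q ^ n
        ≤ Real.exp (-(2 * ((n:ℝ) * a))) * Real.exp ((n:ℝ) * a) :=
          mul_le_mul_of_nonneg_left hlp_le (Real.exp_pos _).le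
      _ = Real.exp (-((n:ℝ) * a)) := by rw [← Real.exp_add]; congr 1; ring
      _ ≤ _ := hTnx.1
  have h3up : Real.exp (2 * ((n:ℝ) * a)) ≤ Real.exp (2 * q₀ * C₀ * n) :=
    Real.exp_le_exp.mpr hexp_le
  have h3lo : Real.exp (-(2 * q₀ * C₀ * n)) ≤ Real.exp (-(2 * ((n:ℝ) * a))) :=
    Real.exp_le_exp.mpr (by linarith)
  have habs1 := habs.1
  have habs2 := habs.2
  rw [hGx] at habs1 habs2
  constructor
  · refine max_le (hhpos x).le ?_
    linarith
  · linarith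


end SFT
end

section
/- Under the stated setup, for every q ∈ [0, q₀] and every integer n ≥ 0, ∫ ψ dμ_q ≤ e^{2 q₀ C₀ n} ( e^{2 q₀ C₀ n} + D ρⁿ ) ( ψ̃ + C₀ D ρⁿ ). -/
open MeasureTheory Real ENNReal

namespace SFT

variable {s₀ : ℕ} {A : Matrix (Fin s₀) (Fin s₀) ℕ}

section Aux

/-- Prepend a symbol to a point (junk = identity when not allowed). -/
noncomputable def cons (i : Fin s₀) (x : Space A) : Space A :=
  if h : A i (x.1 0) = 1 then
    ⟨fun n => Nat.rec i (fun k _ => x.1 k) n, by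
      intro n
      cases n with
      | zero => exact h
      | succ k => exact x.2 k⟩
  else x

lemma shift_cons {i : Fin s₀} {x : Space A} (h : A i (x.1 0) = 1) :
    shift (cons i x) = x := by
  apply Subtype.ext
  funext n
  show (cons i x).1 (n + 1) = x.1 n
  erw [cons, dif_pos h]

lemma cons_zero {i : Fin s₀} {x : Space A} (h : A i (x.1 0) = 1) :
    (cons i x).1 0 = i := by
  erw [cons, dif_pos h]
  rfl

lemma cons_shift (y : Space A) : cons (y.1 0) (shift y) = y := by
  have h : A (y.1 0) ((shift y).1 0) = 1 := y.2 0
  apply Subtype.ext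
  erw [cons, dif_pos h]
  funext n
  cases n with
  | zero => rfl
  | succ k => rfl

end Aux

section Aux2

/-- The fiber of the shift over `x` is parametrised by admissible first symbols. -/
noncomputable def fiberEquiv (x : Space A) :
    {i : Fin s₀ // A i (x.1 0) = 1} ≃ {y : Space A // shift y = x} where
  toFun i := ⟨cons i.1 x, shift_cons i.2⟩
  invFun y := ⟨y.1.1 0, by
    have h : A (y.1.1 0) (y.1.1 1) = 1 := y.1.2 0
    have hx : x.1 0 = y.1.1 1 := congrFun (congrArg Subtype.val y.2.symm) 0
    rw [hx]; exact h⟩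
  left_inv i := Subtype.ext (cons_zero i.2)
  right_inv y := by
    apply Subtype.ext
    have := cons_shift y.1
    rw [y.2] at this
    exact this

lemma transfer_eq_sum (f g : Space A → ℝ) (x : Space A) :
    transfer f g x = ∑ i ∈ Finset.univ.filter (fun i : Fin s₀ => A i (x.1 0) = 1),
      Real.exp (f (cons i x)) * g (cons i x) := by
  rw [transfer, ← Equiv.tsum_eq (fiberEquiv x)
    (fun y : {y : Space A // shift y = x} => Real.exp (f y.1) * g y.1)]
  rw [tsum_fintype]
  rw [Finset.sum_subtype (Finset.univ.filter (fun i : Fin s₀ => A i (x.1 0) = 1))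
    (p := fun i : Fin s₀ => A i (x.1 0) = 1) (by simp)
    (fun i => Real.exp (f (cons i x)) * g (cons i x))]
  rfl

end Aux2

section Aux3

lemma continuous_coord (n : ℕ) : Continuous (fun x : Space A => x.1 n) :=
  (continuous_apply n).comp continuous_subtype_val

lemma eventually_coord_eq (x : Space A) (k : ℕ) :
    ∀ᶠ η in nhds x, ∀ i ≤ k, η.1 i = x.1 i := by
  have hopen : IsOpen {η : Space A | ∀ i ≤ k, η.1 i = x.1 i} := by
    have : {η : Space A | ∀ i ≤ k, η.1 i = x.1 i}
        = ⋂ i : Fin (k+1), {η : Space A | η.1 i.1 = x.1 i.1} := by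
      ext η
      simp only [Set.mem_setOf_eq, Set.mem_iInter]
      constructor
      · intro h i; exact h i.1 (Nat.lt_succ_iff.mp i.2)
      · intro h i hi; exact h ⟨i, Nat.lt_succ_of_le hi⟩
    rw [this]
    exact isOpen_iInter_of_finite fun i =>
      (continuous_coord i.1).isOpen_preimage {x.1 i.1} (isOpen_discrete _)
  exact hopen.mem_nhds (fun i _ => rfl)

lemma continuousAt_cons {i : Fin s₀} {x : Space A} (h : A i (x.1 0) = 1) :
    ContinuousAt (cons i) x := by
  apply (Topology.IsEmbedding.subtypeVal (p := fun ξ : ℕ → Fin s₀ => ∀ n, A (ξ n) (ξ (n+1)) = 1)).toIsInducing.continuousAt_iff.mpr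
  have hc : Continuous (fun η : Space A => (fun n => Nat.rec i (fun k _ => η.1 k) n : ℕ → Fin s₀)) := by
    apply continuous_pi
    intro n
    cases n with
    | zero => exact continuous_const
    | succ k => exact continuous_coord k
  apply hc.continuousAt.congr
  filter_upwards [eventually_coord_eq x 0] with η hη
  have h0 : A i (η.1 0) = 1 := by rw [hη 0 le_rfl]; exact h
  show (fun n => Nat.rec i (fun k _ => η.1 k) n : ℕ → Fin s₀) = Subtype.val (cons i η)
  erw [cons, dif_pos h0]

lemma transfer_continuous {f g : Space A → ℝ} (hf : Continuous f) (hg : Continuous g) :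
    Continuous (transfer f g) := by
  rw [continuous_iff_continuousAt]
  intro x
  have hH : ContinuousAt (fun η : Space A =>
      ∑ i ∈ Finset.univ.filter (fun i : Fin s₀ => A i (x.1 0) = 1),
        Real.exp (f (cons i η)) * g (cons i η)) x := by
    apply tendsto_finset_sum
    intro i hi
    have hAi : A i (x.1 0) = 1 := (Finset.mem_filter.mp hi).2
    have hci := continuousAt_cons hAi
    exact ((Real.continuous_exp.continuousAt.comp (hf.continuousAt.comp hci)).mul
      (hg.continuousAt.comp hci))
  apply hH.congr
  filter_upwards [eventually_coord_eq x 0] with η hη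
  rw [transfer_eq_sum]
  have h0 : η.1 0 = x.1 0 := hη 0 le_rfl
  rw [h0]

end Aux3

section Aux4

lemma evar_le (θ : ℝ) (hθ0 : 0 < θ) (g : Space A → ℝ) (k : ℕ) :
    evar g k ≤ eHolder θ g * ENNReal.ofReal (θ ^ k) := by
  have hne : ENNReal.ofReal (θ ^ k) ≠ 0 := by
    simp [ENNReal.ofReal_eq_zero, not_le, pow_pos hθ0 k]
  have hnt : ENNReal.ofReal (θ ^ k) ≠ ⊤ := ENNReal.ofReal_ne_top
  have h1 : evar g k / ENNReal.ofReal (θ ^ k) ≤ eHolder θ g :=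
    le_iSup (fun k => evar g k / ENNReal.ofReal (θ ^ k)) k
  calc evar g k = evar g k / ENNReal.ofReal (θ ^ k) * ENNReal.ofReal (θ ^ k) := by
        rw [ENNReal.div_mul_cancel hne hnt]
    _ ≤ eHolder θ g * ENNReal.ofReal (θ ^ k) := mul_le_mul_left h1 _

lemma abs_sub_le_of_coord_eq {θ : ℝ} (hθ0 : 0 < θ) {g : Space A → ℝ}
    (hg : MemF θ g) {k : ℕ} {ξ η : Space A} (h : ∀ i ≤ k, ξ.1 i = η.1 i) :
    |g ξ - g η| ≤ ((eHolder θ g).toReal + 1) * θ ^ k := by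
  have hfin : eHolder θ g ≠ ⊤ :=
    ne_top_of_lt (lt_of_le_of_lt (le_add_right le_rfl) hg)
  have h1 : ENNReal.ofReal |g ξ - g η| ≤ evar g k := by
    refine le_trans ?_ (le_iSup _ ξ)
    refine le_trans ?_ (le_iSup _ η)
    exact le_iSup (fun _ : ∀ i ≤ k, ξ.1 i = η.1 i => ENNReal.ofReal |g ξ - g η|) h
  have h2 : ENNReal.ofReal |g ξ - g η|
      ≤ ENNReal.ofReal (((eHolder θ g).toReal + 1) * θ ^ k) := by
    refine le_trans h1 (le_trans (evar_le θ hθ0 g k) ?_)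
    rw [ENNReal.ofReal_mul (by positivity)]
    refine mul_le_mul_left ?_ _
    rw [← ENNReal.ofReal_toReal hfin]
    exact ENNReal.ofReal_le_ofReal (by
      rw [ENNReal.toReal_ofReal ENNReal.toReal_nonneg]; linarith)
  have := (ENNReal.ofReal_le_ofReal_iff (by positivity)).mp h2
  exact this

lemma memF_continuous {θ : ℝ} (hθ0 : 0 < θ) (hθ1 : θ < 1) {g : Space A → ℝ}
    (hg : MemF θ g) : Continuous g := by
  rw [continuous_iff_continuousAt]
  intro x
  rw [ContinuousAt, Metric.tendsto_nhds]
  intro ε hε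
  set C : ℝ := (eHolder θ g).toReal + 1 with hC
  have hCpos : 0 < C := by positivity
  obtain ⟨k, hk⟩ := exists_pow_lt_of_lt_one (div_pos hε hCpos) hθ1
  filter_upwards [eventually_coord_eq x k] with η hη
  have : |g η - g x| ≤ C * θ ^ k :=
    abs_sub_le_of_coord_eq hθ0 hg (fun i hi => (hη i hi))
  have h2 : C * θ ^ k < ε := by
    have h3 := (lt_div_iff₀ hCpos).mp hk
    calc C * θ ^ k = θ ^ k * C := mul_comm _ _
      _ < ε := h3
  rw [Real.dist_eq]
  linarith

end Aux4

section Aux5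

lemma eSup_le_of_bdd {g : Space A → ℝ} {B : ℝ} (hB : ∀ x, |g x| ≤ B) :
    eSup g ≤ ENNReal.ofReal B :=
  iSup_le fun ξ => ENNReal.ofReal_le_ofReal (hB ξ)

lemma abs_le_supNorm_of_bdd {g : Space A → ℝ} {B : ℝ} (hB : ∀ x, |g x| ≤ B)
    (x : Space A) : |g x| ≤ supNorm g := by
  have hfin : eSup g ≠ ⊤ := ne_top_of_le_ne_top ENNReal.ofReal_ne_top (eSup_le_of_bdd hB)
  have h1 : ENNReal.ofReal |g x| ≤ eSup g := le_iSup (fun ξ => ENNReal.ofReal |g ξ|) x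
  have := ENNReal.toReal_mono hfin h1
  rwa [ENNReal.toReal_ofReal (abs_nonneg _)] at this

lemma abs_le_supNorm_of_memF {θ : ℝ} {g : Space A → ℝ} (hg : MemF θ g) (x : Space A) :
    |g x| ≤ supNorm g := by
  have hfin : eSup g ≠ ⊤ := ne_top_of_lt (lt_of_le_of_lt (le_add_left le_rfl) hg)
  have h1 : ENNReal.ofReal |g x| ≤ eSup g := le_iSup (fun ξ => ENNReal.ofReal |g ξ|) x
  have := ENNReal.toReal_mono hfin h1
  rwa [ENNReal.toReal_ofReal (abs_nonneg _)] at this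

lemma supNorm_le_fNorm (θ : ℝ) (g : Space A → ℝ) : supNorm g ≤ fNorm θ g :=
  le_add_of_nonneg_left ENNReal.toReal_nonneg

lemma eHolder_const (θ : ℝ) (c : ℝ) : eHolder θ (fun _ : Space A => c) = 0 := by
  rw [eHolder]
  simp only [evar, sub_self, abs_zero, ENNReal.ofReal_zero]
  simp [ENNReal.zero_div]

lemma memF_const (θ : ℝ) (c : ℝ) : MemF θ (fun _ : Space A => c) := by
  rw [MemF, eHolder_const]
  refine lt_of_le_of_lt (le_of_eq (zero_add _)) ?_
  exact lt_of_le_of_lt (eSup_le_of_bdd (fun x => le_of_eq rfl)) ENNReal.ofReal_lt_top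

lemma fNorm_one_le (θ : ℝ) : fNorm θ (fun _ : Space A => (1:ℝ)) ≤ 1 := by
  rw [fNorm, holderNorm, eHolder_const, ENNReal.toReal_zero, zero_add, supNorm]
  have := eSup_le_of_bdd (g := fun _ : Space A => (1:ℝ)) (B := 1) (fun x => by simp)
  calc (eSup (fun _ : Space A => (1:ℝ))).toReal ≤ (ENNReal.ofReal 1).toReal :=
        ENNReal.toReal_mono ENNReal.ofReal_ne_top this
    _ = 1 := by simp

end Aux5

section Aux6

lemma transfer_mono {f u v : Space A → ℝ} (h : ∀ x, u x ≤ v x) (x : Space A) :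
    transfer f u x ≤ transfer f v x := by
  rw [transfer_eq_sum, transfer_eq_sum]
  refine Finset.sum_le_sum fun i _ => ?_
  exact mul_le_mul_of_nonneg_left (h _) (Real.exp_pos _).le

lemma transfer_nonneg {f u : Space A → ℝ} (h : ∀ x, 0 ≤ u x) (x : Space A) :
    0 ≤ transfer f u x := by
  rw [transfer_eq_sum]
  exact Finset.sum_nonneg fun i _ => mul_nonneg (Real.exp_pos _).le (h _)

lemma transfer_const_mul (f u : Space A → ℝ) (c : ℝ) :
    transfer f (fun y => c * u y) = fun x => c * transfer f u x := by
  funext x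
  rw [transfer_eq_sum, transfer_eq_sum, Finset.mul_sum]
  exact Finset.sum_congr rfl fun i _ => by ring

lemma iterate_mono (f : Space A → ℝ) (n : ℕ) :
    ∀ u v : Space A → ℝ, (∀ x, u x ≤ v x) →
      ∀ x, (transfer f)^[n] u x ≤ (transfer f)^[n] v x := by
  induction n with
  | zero => intro u v h x; exact h x
  | succ n ih =>
    intro u v h x
    rw [Function.iterate_succ_apply, Function.iterate_succ_apply]
    exact ih _ _ (transfer_mono h) x

lemma iterate_nonneg (f : Space A → ℝ) (n : ℕ) :
    ∀ u : Space A → ℝ, (∀ x, 0 ≤ u x) → ∀ x, 0 ≤ (transfer f)^[n] u x := by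
  induction n with
  | zero => intro u h x; exact h x
  | succ n ih =>
    intro u h x
    rw [Function.iterate_succ_apply]
    exact ih _ (transfer_nonneg h) x

lemma iterate_const_mul (f : Space A → ℝ) (n : ℕ) (c : ℝ) :
    ∀ u : Space A → ℝ,
      (transfer f)^[n] (fun y => c * u y) = fun x => c * (transfer f)^[n] u x := by
  induction n with
  | zero => intro u; rfl
  | succ n ih =>
    intro u
    rw [Function.iterate_succ_apply, transfer_const_mul, ih,
      Function.iterate_succ_apply]

lemma iterate_continuous {f : Space A → ℝ} (hf : Continuous f) (n : ℕ) :
    ∀ {g : Space A → ℝ}, Continuous g → Continuous ((transfer f)^[n] g) := by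
  induction n with
  | zero => intro g hg; exact hg
  | succ n ih =>
    intro g hg
    rw [Function.iterate_succ_apply]
    exact ih (transfer_continuous hf hg)

/-- One-step domination: `L_{φ+qψ} g ≤ e^{qβ} L_φ g` for `g ≥ 0`. -/
lemma transfer_dom {φ ψ : Space A → ℝ} {q β : ℝ} (hq : 0 ≤ q)
    (hβ : ∀ x, ψ x ≤ β) {g : Space A → ℝ} (hg : ∀ x, 0 ≤ g x) (x : Space A) :
    transfer (fun y => φ y + q * ψ y) g x ≤ Real.exp (q * β) * transfer φ g x := by
  rw [transfer_eq_sum, transfer_eq_sum, Finset.mul_sum]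
  refine Finset.sum_le_sum fun i _ => ?_
  rw [← mul_assoc, ← Real.exp_add]
  refine mul_le_mul_of_nonneg_right (Real.exp_le_exp.mpr ?_) (hg _)
  have := mul_le_mul_of_nonneg_left (hβ (cons i x)) hq
  linarith

lemma iterate_dom {φ ψ : Space A → ℝ} {q β : ℝ} (hq : 0 ≤ q) (hβ0 : 0 ≤ β)
    (hβ : ∀ x, ψ x ≤ β) (n : ℕ) :
    ∀ g : Space A → ℝ, (∀ x, 0 ≤ g x) → ∀ x,
      (transfer (fun y => φ y + q * ψ y))^[n] g x
        ≤ Real.exp (q * β * n) * (transfer φ)^[n] g x := by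
  induction n with
  | zero => intro g hg x; simp
  | succ n ih =>
    intro g hg x
    rw [Function.iterate_succ_apply, Function.iterate_succ_apply]
    calc (transfer (fun y => φ y + q * ψ y))^[n] (transfer (fun y => φ y + q * ψ y) g) x
        ≤ Real.exp (q * β * n) *
          (transfer φ)^[n] (transfer (fun y => φ y + q * ψ y) g) x :=
          ih _ (transfer_nonneg hg) x
      _ ≤ Real.exp (q * β * n) *
          (transfer φ)^[n] (fun y => Real.exp (q * β) * transfer φ g y) x := by
          refine mul_le_mul_of_nonneg_left ?_ (Real.exp_pos _).le
          exact iterate_mono φ n _ _ (transfer_dom hq hβ hg) x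
      _ = Real.exp (q * β * (n + 1)) * (transfer φ)^[n] (transfer φ g) x := by
          rw [iterate_const_mul]
          rw [← mul_assoc, ← Real.exp_add]
          ring_nf
      _ = Real.exp (q * β * (n + 1 : ℕ)) * (transfer φ)^[n] (transfer φ g) x := by
          norm_num

end Aux6

section Aux7

lemma integrable_of_bdd_continuous {m : Measure (Space A)} [IsProbabilityMeasure m]
    {u : Space A → ℝ} (hu : Continuous u) {B : ℝ} (hB : ∀ x, |u x| ≤ B) :
    Integrable u m := by
  refine (integrable_const B).mono hu.aestronglyMeasurable ?_
  refine Filter.Eventually.of_forall fun x => ?_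
  rw [Real.norm_eq_abs, Real.norm_eq_abs]
  exact (hB x).trans (le_abs_self B)

lemma integral_transfer_iterate {f : Space A → ℝ} (hf : Continuous f)
    {lam : ℝ} {m : Measure (Space A)}
    (hid : ∀ g : Space A → ℝ, Continuous g →
      ∫ x, transfer f g x ∂m = lam * ∫ x, g x ∂m) (n : ℕ) :
    ∀ g : Space A → ℝ, Continuous g →
      ∫ x, (transfer f)^[n] g x ∂m = lam ^ n * ∫ x, g x ∂m := by
  induction n with
  | zero => intro g hg; simp
  | succ n ih =>
    intro g hg
    have h1 : ∫ x, (transfer f)^[n] (transfer f g) x ∂m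
        = lam ^ n * ∫ x, transfer f g x ∂m := ih _ (transfer_continuous hf hg)
    rw [Function.iterate_succ_apply]
    rw [h1, hid g hg, pow_succ]
    ring

end Aux7

theorem statement13
    {s₀ M : ℕ} {A : Matrix (Fin s₀) (Fin s₀) ℕ} {θ : ℝ}
    (hs₀ : 2 ≤ s₀) (h01 : ∀ i j, A i j = 0 ∨ A i j = 1) (hM : 0 < M)
    (hap : ∀ i j, 0 < (A ^ M) i j) (hθ0 : 0 < θ) (hθ1 : θ < 1)
    (φ ψ : Space A → ℝ) (hφ : MemF θ φ) (hψ : MemF θ ψ)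
    (hL1 : transfer φ (fun _ => 1) = fun _ => 1) (hψ0 : ∀ x, 0 ≤ ψ x)
    (hcoh : ¬ CohomToConst ψ)
    (μ : Measure (Space A)) (hμ : IsEqm φ μ) (ψt : ℝ) (hψt : ψt = ∫ x, ψ x ∂μ)
    (b C₀ : ℝ) (hb : b = max 1 (holderNorm θ ψ))
    (hC₀ : C₀ = fNorm θ φ + 2 * max (supNorm ψ) 1)
    (lam : ℝ → ℝ) (ν : ℝ → Measure (Space A)) (hq : ℝ → Space A → ℝ)
    (hRPF : ∀ q : ℝ, IsRPF θ (fun x => φ x + q * ψ x) (lam q) (ν q) (hq q))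
    (D ρ : ℝ) (hD1 : 1 ≤ D) (hρ : ρ ∈ Set.Ioo (0:ℝ) 1)
    (hgap : ∀ q : ℝ, |q| ≤ 1 / b → ∀ g : Space A → ℝ, MemF θ g → ∀ n : ℕ,
      fNorm θ (fun x => (transfer (fun y => φ y + q * ψ y))^[n] g x / lam q ^ n
          - hq q x * ∫ y, g y ∂(ν q)) ≤ D * ρ ^ n * fNorm θ g)
    (hLψ : ∀ n : ℕ, supNorm (fun x => (transfer φ)^[n] ψ x - ψt) ≤ C₀ * D * ρ ^ n)
    (q₀ : ℝ) (hq₀pos : 0 < q₀) (hq₀b : q₀ ≤ 1 / b) :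
    ∀ q ∈ Set.Icc (0 : ℝ) q₀, ∀ n : ℕ,
      (∫ x, ψ x ∂((ν q).withDensity fun x => ENNReal.ofReal (hq q x))) ≤
        Real.exp (2 * q₀ * C₀ * n) * (Real.exp (2 * q₀ * C₀ * n) + D * ρ ^ n) *
          (ψt + C₀ * D * ρ ^ n) := by
  intro q hqI n
  obtain ⟨hq0, hqq₀⟩ := hqI
  obtain ⟨hlam, hνp, hid, hmemh, hhpos, hheig, hhint⟩ := hRPF q
  haveI := hνp
  have hμp : IsProbabilityMeasure μ := hμ.1
  have hφc : Continuous φ := memF_continuous hθ0 hθ1 hφ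
  have hψc : Continuous ψ := memF_continuous hθ0 hθ1 hψ
  have hfc : Continuous (fun y => φ y + q * ψ y) := hφc.add (continuous_const.mul hψc)
  have hhc : Continuous (hq q) := memF_continuous hθ0 hθ1 hmemh
  have hρ0 : (0:ℝ) < ρ := hρ.1
  have hρn : (0:ℝ) ≤ D * ρ ^ n := by positivity
  -- sup bound for ψ
  have hβ0 : (0:ℝ) ≤ supNorm ψ := ENNReal.toReal_nonneg
  have hψβ : ∀ x, ψ x ≤ supNorm ψ :=
    fun x => (le_abs_self _).trans (abs_le_supNorm_of_memF hψ x)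
  -- constants
  have hC₀2 : (2:ℝ) ≤ C₀ := by
    have h1 : (0:ℝ) ≤ fNorm θ φ := add_nonneg ENNReal.toReal_nonneg ENNReal.toReal_nonneg
    have h2 : (1:ℝ) ≤ max (supNorm ψ) 1 := le_max_right _ _
    rw [hC₀]; linarith
  have hβC₀ : supNorm ψ ≤ C₀ := by
    have h2 : supNorm ψ ≤ max (supNorm ψ) 1 := le_max_left _ _
    have h1 : (0:ℝ) ≤ fNorm θ φ := add_nonneg ENNReal.toReal_nonneg ENNReal.toReal_nonneg
    rw [hC₀]; linarith
  have hn0 : (0:ℝ) ≤ (n:ℝ) := Nat.cast_nonneg n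
  have hexp : Real.exp (q * supNorm ψ * n) ≤ Real.exp (2 * q₀ * C₀ * n) := by
    apply Real.exp_le_exp.mpr
    have h1 : q * supNorm ψ ≤ q₀ * C₀ := mul_le_mul hqq₀ hβC₀ hβ0 hq₀pos.le
    have h2 : q₀ * C₀ ≤ 2 * q₀ * C₀ := by nlinarith
    exact mul_le_mul_of_nonneg_right (h1.trans h2) hn0
  -- λ_q ≥ 1
  have hLφ1 : ∀ m : ℕ, (transfer φ)^[m] (fun _ => (1:ℝ)) = fun _ => 1 :=
    fun m => Function.iterate_fixed hL1 m
  have h1le : ∀ x, (1:ℝ) ≤ transfer (fun y => φ y + q * ψ y) (fun _ => 1) x := by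
    intro x
    have h0 : transfer φ (fun _ => 1) x = 1 := congrFun hL1 x
    have h2 : transfer φ (fun _ => (1:ℝ)) x
        ≤ transfer (fun y => φ y + q * ψ y) (fun _ => (1:ℝ)) x := by
      rw [transfer_eq_sum, transfer_eq_sum]
      refine Finset.sum_le_sum fun i _ => ?_
      have h3 := mul_nonneg hq0 (hψ0 (cons i x))
      have h4 : Real.exp (φ (cons i x)) ≤ Real.exp (φ (cons i x) + q * ψ (cons i x)) :=
        Real.exp_le_exp.mpr (by linarith)
      simpa using h4
    rw [h0] at h2
    exact h2
  have hlam1 : (1:ℝ) ≤ lam q := by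
    have hint := hid (fun _ => 1) continuous_const
    have hI1 : (∫ (_ : Space A), (1:ℝ) ∂(ν q)) = 1 := by simp
    by_cases hI : Integrable (transfer (fun y => φ y + q * ψ y) fun _ => 1) (ν q)
    · have hm := integral_mono (μ := ν q) (integrable_const 1) hI h1le
      rw [hI1] at hm
      rw [hint] at hm
      simpa [hI1] using hm
    · exfalso
      rw [integral_undef hI] at hint
      simp [hI1] at hint
      linarith
  have hlamn : (1:ℝ) ≤ lam q ^ n := one_le_pow₀ hlam1
  -- pointwise bound on L_φ^n ψ
  have hψt0 : 0 ≤ ψt := hψt ▸ integral_nonneg hψ0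
  have hLφψ0 : ∀ x, 0 ≤ (transfer φ)^[n] ψ x := iterate_nonneg φ n ψ hψ0
  have hLφψβ : ∀ x, (transfer φ)^[n] ψ x ≤ supNorm ψ := by
    intro x
    have h1 := iterate_mono φ n ψ (fun _ => supNorm ψ) hψβ x
    have h2 : (transfer φ)^[n] (fun _ => supNorm ψ) = fun _ => supNorm ψ := by
      have h3 : (fun _ : Space A => supNorm ψ) = fun y => supNorm ψ * (fun _ : Space A => (1:ℝ)) y := by
        funext y; ring
      rw [h3, iterate_const_mul, hLφ1]
    rw [h2] at h1
    exact h1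
  have hLφψub : ∀ x, (transfer φ)^[n] ψ x ≤ ψt + C₀ * D * ρ ^ n := by
    intro x
    have hbd : ∀ y, |(transfer φ)^[n] ψ y - ψt| ≤ supNorm ψ + ψt := by
      intro y
      refine abs_le.mpr ⟨by linarith [hLφψ0 y], by linarith [hLφψβ y]⟩
    have h1 := (abs_le_supNorm_of_bdd hbd x).trans (hLψ n)
    linarith [(abs_le.mp h1).2]
  -- pointwise bound on h_q
  have hqb1 : |q| ≤ 1 / b := by rw [abs_of_nonneg hq0]; exact hqq₀.trans hq₀b
  have hgap1 := hgap q hqb1 (fun _ => (1:ℝ)) (memF_const θ 1) n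
  have hIν : (∫ y, (fun _ : Space A => (1:ℝ)) y ∂(ν q)) = 1 := by simp
  simp only [hIν, mul_one] at hgap1
  have hLq1ub : ∀ x, (transfer (fun y => φ y + q * ψ y))^[n] (fun _ => (1:ℝ)) x
      ≤ Real.exp (q * supNorm ψ * n) := by
    intro x
    have h1 := iterate_dom (φ := φ) hq0 hβ0 hψβ n (fun _ => (1:ℝ)) (fun _ => zero_le_one) x
    rw [hLφ1 n] at h1
    simpa using h1
  have hLq10 : ∀ x, 0 ≤ (transfer (fun y => φ y + q * ψ y))^[n] (fun _ => (1:ℝ)) x :=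
    iterate_nonneg _ n _ (fun _ => zero_le_one)
  have hhub : ∀ x, hq q x ≤ Real.exp (2 * q₀ * C₀ * n) + D * ρ ^ n := by
    intro x
    have hdiv0 : ∀ y, 0 ≤ (transfer (fun y => φ y + q * ψ y))^[n] (fun _ => (1:ℝ)) y / lam q ^ n :=
      fun y => div_nonneg (hLq10 y) (by linarith)
    have hdivub : ∀ y, (transfer (fun y => φ y + q * ψ y))^[n] (fun _ => (1:ℝ)) y / lam q ^ n
        ≤ Real.exp (q * supNorm ψ * n) :=
      fun y => (div_le_self (hLq10 y) hlamn).trans (hLq1ub y)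
    have hhb : ∀ y, |hq q y| ≤ supNorm (hq q) := abs_le_supNorm_of_memF hmemh
    have hbd : ∀ y, |(transfer (fun y => φ y + q * ψ y))^[n] (fun _ => (1:ℝ)) y / lam q ^ n
        - hq q y| ≤ Real.exp (q * supNorm ψ * n) + supNorm (hq q) := by
      intro y
      have h1 := abs_le.mp (hhb y)
      exact abs_le.mpr ⟨by linarith [hdiv0 y, hdivub y], by linarith [hdiv0 y, hdivub y]⟩
    have h2 := abs_le_supNorm_of_bdd hbd x
    have h3 : supNorm (fun y => (transfer (fun y => φ y + q * ψ y))^[n] (fun _ => (1:ℝ)) y / lam q ^ n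
        - hq q y) ≤ D * ρ ^ n := by
      refine (supNorm_le_fNorm θ _).trans (hgap1.trans ?_)
      have := fNorm_one_le (A := A) θ
      nlinarith
    have h4 := (h2.trans h3)
    have h5 := (abs_le.mp h4).1
    have := hdivub x
    have := hexp
    linarith
  -- integral identity for ψ
  have hiter := integral_transfer_iterate hfc hid n ψ hψc
  have hLqψ0 : ∀ x, 0 ≤ (transfer (fun y => φ y + q * ψ y))^[n] ψ x :=
    iterate_nonneg _ n ψ hψ0
  have hLqψub : ∀ x, (transfer (fun y => φ y + q * ψ y))^[n] ψ x
      ≤ Real.exp (2 * q₀ * C₀ * n) * (ψt + C₀ * D * ρ ^ n) := by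
    intro x
    have h1 := iterate_dom (φ := φ) hq0 hβ0 hψβ n ψ hψ0 x
    have h2 : Real.exp (q * supNorm ψ * n) * (transfer φ)^[n] ψ x
        ≤ Real.exp (q * supNorm ψ * n) * (ψt + C₀ * D * ρ ^ n) :=
      mul_le_mul_of_nonneg_left (hLφψub x) (Real.exp_pos _).le
    have h3 : Real.exp (q * supNorm ψ * n) * (ψt + C₀ * D * ρ ^ n)
        ≤ Real.exp (2 * q₀ * C₀ * n) * (ψt + C₀ * D * ρ ^ n) := by
      have : 0 ≤ ψt + C₀ * D * ρ ^ n := by positivity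
      exact mul_le_mul_of_nonneg_right hexp this
    linarith
  have hψint : Integrable ψ (ν q) :=
    integrable_of_bdd_continuous hψc (fun x => abs_le_supNorm_of_memF hψ x)
  have hLqψint : Integrable ((transfer (fun y => φ y + q * ψ y))^[n] ψ) (ν q) := by
    refine integrable_of_bdd_continuous (iterate_continuous hfc n hψc)
      (B := Real.exp (2 * q₀ * C₀ * n) * (ψt + C₀ * D * ρ ^ n)) (fun x => ?_)
    rw [abs_of_nonneg (hLqψ0 x)]
    exact hLqψub x
  have hintpsi0 : 0 ≤ ∫ x, ψ x ∂(ν q) := integral_nonneg hψ0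
  have hintpsiub : ∫ x, ψ x ∂(ν q) ≤ Real.exp (2 * q₀ * C₀ * n) * (ψt + C₀ * D * ρ ^ n) := by
    have h1 : ∫ x, (transfer (fun y => φ y + q * ψ y))^[n] ψ x ∂(ν q)
        ≤ Real.exp (2 * q₀ * C₀ * n) * (ψt + C₀ * D * ρ ^ n) := by
      have h2 := integral_mono hLqψint
        (integrable_const (Real.exp (2 * q₀ * C₀ * n) * (ψt + C₀ * D * ρ ^ n))) hLqψub
      rwa [integral_const, probReal_univ, one_smul] at h2
    have h3 : (∫ x, ψ x ∂(ν q)) ≤ lam q ^ n * ∫ x, ψ x ∂(ν q) :=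
      le_mul_of_one_le_left hintpsi0 hlamn
    rw [← hiter] at h3
    linarith
  -- rewrite the LHS
  have hLHS : (∫ x, ψ x ∂((ν q).withDensity fun x => ENNReal.ofReal (hq q x)))
      = ∫ x, hq q x * ψ x ∂(ν q) := by
    have hmeas : Measurable (fun x => (hq q x).toNNReal) :=
      (continuous_real_toNNReal.comp hhc).measurable
    have h1 : (∫ x, ψ x ∂((ν q).withDensity fun x => ((hq q x).toNNReal : ℝ≥0∞)))
        = ∫ x, ((hq q x).toNNReal : ℝ≥0∞).toReal • ψ x ∂(ν q) := by
      rw [integral_withDensity_eq_integral_smul hmeas]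
      rfl
    rw [show (fun x => ENNReal.ofReal (hq q x)) = fun x => ((hq q x).toNNReal : ℝ≥0∞) from rfl]
    rw [h1]
    congr 1
    funext x
    rw [ENNReal.coe_toReal, Real.coe_toNNReal _ (hhpos x).le, smul_eq_mul]
  have hhψint : Integrable (fun x => hq q x * ψ x) (ν q) := by
    refine integrable_of_bdd_continuous (hhc.mul hψc)
      (B := supNorm (hq q) * supNorm ψ) (fun x => ?_)
    rw [abs_mul]
    exact mul_le_mul (abs_le_supNorm_of_memF hmemh x) (abs_le_supNorm_of_memF hψ x)
      (abs_nonneg _) ENNReal.toReal_nonneg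
  have hKh0 : 0 ≤ Real.exp (2 * q₀ * C₀ * n) + D * ρ ^ n := by positivity
  have hmain : ∫ x, hq q x * ψ x ∂(ν q)
      ≤ (Real.exp (2 * q₀ * C₀ * n) + D * ρ ^ n) * ∫ x, ψ x ∂(ν q) := by
    have h1 : ∀ x, hq q x * ψ x ≤ (Real.exp (2 * q₀ * C₀ * n) + D * ρ ^ n) * ψ x :=
      fun x => mul_le_mul_of_nonneg_right (hhub x) (hψ0 x)
    have h2 := integral_mono hhψint (hψint.const_mul _) h1
    rwa [integral_const_mul] at h2
  rw [hLHS]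
  calc ∫ x, hq q x * ψ x ∂(ν q)
      ≤ (Real.exp (2 * q₀ * C₀ * n) + D * ρ ^ n) * ∫ x, ψ x ∂(ν q) := hmain
    _ ≤ (Real.exp (2 * q₀ * C₀ * n) + D * ρ ^ n) *
        (Real.exp (2 * q₀ * C₀ * n) * (ψt + C₀ * D * ρ ^ n)) :=
        mul_le_mul_of_nonneg_left hintpsiub hKh0
    _ = Real.exp (2 * q₀ * C₀ * n) * (Real.exp (2 * q₀ * C₀ * n) + D * ρ ^ n) *
        (ψt + C₀ * D * ρ ^ n) := by ring

end SFT
end
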